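/- arXiv:1509.05815 — 4 statements merged into one kernel-verified Lean document; each statement's English description precedes it below -/
import Mathlib

section
/- A finite hypergraph G has a simple cycle if and only if e(G) + (number of connected components of G) ≥ v(G) + 1. -/
/-- Two vertices are related if they lie in a common edge. -/
def HStep {V E : Type*} (H : E → Finset V) : V → V → Prop :=
  fun p q => ∃ e, p ∈ H e ∧ q ∈ H e

/-- `G` has a simple cycle: there are `ℓ ≥ 2` pairwise distinct edges `e 0, …, e (ℓ-1)` and
pairwise distinct vertices `v 0, …, v (ℓ-1)` with `v ℓ = v 0`, such that edge `e k`
contains both `v k` and `v (k+1)`. -/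
def HasSimpleCycle {V E : Type*} (H : E → Finset V) : Prop :=
  ∃ ℓ : ℕ, 2 ≤ ℓ ∧ ∃ (v : Fin (ℓ + 1) → V) (e : Fin ℓ → E),
    v (Fin.last ℓ) = v 0 ∧
    (∀ k k' : Fin ℓ, v k.castSucc = v k'.castSucc → k = k') ∧
    Function.Injective e ∧
    ∀ k : Fin ℓ, v k.castSucc ∈ H (e k) ∧ v k.succ ∈ H (e k)

open Relation Function

section Paths

variable {V E : Type*} (H : E → Finset V) (e0 : E)

/-- Path steps: edges avoiding `e0`. -/
def IsGP (x : ℕ → V) (f : ℕ → E) (n : ℕ) : Prop :=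
  ∀ k < n, f k ≠ e0 ∧ x k ∈ H (f k) ∧ x (k + 1) ∈ H (f k)

def GoodPath (a b : V) (n : ℕ) : Prop :=
  ∃ x f, x 0 = a ∧ x n = b ∧ IsGP H e0 x f n

variable {H e0}

theorem gp_refl (a : V) : GoodPath H e0 a a 0 :=
  ⟨fun _ => a, fun _ => e0, rfl, rfl, fun k hk => absurd hk (Nat.not_lt_zero k)⟩

theorem gp_single {a b : V} {e : E} (he : e ≠ e0) (ha : a ∈ H e) (hb : b ∈ H e) :
    GoodPath H e0 a b 1 := by
  refine ⟨fun k => if k = 0 then a else b, fun _ => e, by simp, by simp, fun k hk => ?_⟩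
  interval_cases k
  simp [he, ha, hb]

theorem gp_glue {a b c : V} {m m' : ℕ} (h1 : GoodPath H e0 a c m)
    (h2 : GoodPath H e0 c b m') : GoodPath H e0 a b (m + m') := by
  obtain ⟨x, f, hx0, hxm, hx⟩ := h1
  obtain ⟨y, g, hy0, hym, hy⟩ := h2
  refine ⟨fun k => if k < m then x k else y (k - m), fun k => if k < m then f k else g (k - m),
    ?_, ?_, fun k hk => ?_⟩
  · by_cases h : 0 < m
    · simp [h, hx0]
    · have hm : m = 0 := by omega
      subst hm
      simp only [lt_self_iff_false, if_false, Nat.sub_zero]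
      rw [hy0, ← hxm, hx0]
  · have : ¬ (m + m' < m) := by omega
    simp [this, hy0, hym]
  · by_cases h : k < m
    · obtain ⟨h1, h2, h3⟩ := hx k h
      refine ⟨by simpa [h] using h1, by simpa [h] using h2, ?_⟩
      by_cases h' : k + 1 < m
      · simpa [h, h'] using h3
      · have hkm : k + 1 = m := by omega
        have : y (k + 1 - m) = x (k + 1) := by rw [hkm]; simp [hy0, ← hxm]
        simpa [h, h', this, hkm, hy0, ← hxm] using h3
    · have hk' : k - m < m' := by omega
      obtain ⟨h1, h2, h3⟩ := hy (k - m) hk'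
      have h'' : ¬ (k + 1 < m) := by omega
      have : k + 1 - m = k - m + 1 := by omega
      exact ⟨by simpa [h] using h1, by simpa [h] using h2, by simpa [h, h'', this] using h3⟩

theorem gp_rev {a b : V} {n : ℕ} (h : GoodPath H e0 a b n) : GoodPath H e0 b a n := by
  obtain ⟨x, f, hx0, hxn, hx⟩ := h
  refine ⟨fun k => x (n - k), fun k => f (n - 1 - k), by simp [hxn], by simp [hx0], fun k hk => ?_⟩
  obtain ⟨h1, h2, h3⟩ := hx (n - 1 - k) (by omega)
  have e1 : n - 1 - k + 1 = n - k := by omega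
  have e2 : n - (k + 1) = n - 1 - k := by omega
  refine ⟨h1, ?_, ?_⟩
  · show x (n - k) ∈ _
    rw [← e1]; exact h3
  · show x (n - (k + 1)) ∈ _
    rw [e2]; exact h2

theorem gp_sub {x : ℕ → V} {f : ℕ → E} {n : ℕ} (h : IsGP H e0 x f n) {p q : ℕ}
    (hpq : p ≤ q) (hqn : q ≤ n) : GoodPath H e0 (x p) (x q) (q - p) := by
  refine ⟨fun k => x (p + k), fun k => f (p + k), by simp, by simp [Nat.add_sub_cancel' hpq], fun k hk => ?_⟩
  obtain ⟨h1, h2, h3⟩ := h (p + k) (by omega)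
  exact ⟨h1, h2, by rw [show p + k + 1 = p + (k+1) from rfl] at h3; exact h3⟩

end Paths
section Part2

variable {V E : Type*} [DecidableEq E]

theorem eqvGen_iff_goodPath {H : E → Finset V} {e0 : E} {a b : V} :
    Relation.EqvGen (HStep (Function.update H e0 ∅)) a b ↔ ∃ n, GoodPath H e0 a b n := by
  constructor
  · intro h
    induction h with
    | rel x y hxy =>
      obtain ⟨e, hx, hy⟩ := hxy
      have he : e ≠ e0 := by
        intro h; rw [h, Function.update_self] at hx; exact absurd hx (Finset.notMem_empty x)
      rw [Function.update_of_ne he] at hx hy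
      exact ⟨1, gp_single he hx hy⟩
    | refl x => exact ⟨0, gp_refl x⟩
    | symm x y _ ih => obtain ⟨n, hn⟩ := ih; exact ⟨n, gp_rev hn⟩
    | trans x y z _ _ ih1 ih2 =>
      obtain ⟨n, hn⟩ := ih1; obtain ⟨m, hm⟩ := ih2; exact ⟨n + m, gp_glue hn hm⟩
  · rintro ⟨n, x, f, hx0, hxn, hx⟩
    have key : ∀ k ≤ n, Relation.EqvGen (HStep (Function.update H e0 ∅)) a (x k) := by
      intro k hk
      induction k with
      | zero => rw [hx0]; exact Relation.EqvGen.refl a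
      | succ k ih =>
        refine Relation.EqvGen.trans _ _ _ (ih (by omega)) (Relation.EqvGen.rel _ _ ?_)
        obtain ⟨h1, h2, h3⟩ := hx k (by omega)
        exact ⟨f k, by rw [Function.update_of_ne h1]; exact ⟨h2, h3⟩⟩
    rw [← hxn]; exact key n le_rfl

/-- There is an edge `e0` with two distinct vertices connected avoiding `e0`. -/
def CycHelp (H : E → Finset V) : Prop :=
  ∃ (e0 : E) (a b : V), a ∈ H e0 ∧ b ∈ H e0 ∧ a ≠ b ∧ ∃ n, GoodPath H e0 a b n

theorem cycHelp_mono {H : E → Finset V} {e0 : E}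
    (h : CycHelp (Function.update H e0 ∅)) : CycHelp H := by
  obtain ⟨e1, a, b, ha, hb, hab, n, x, f, hx0, hxn, hx⟩ := h
  have he1 : e1 ≠ e0 := by
    intro h; rw [h, Function.update_self] at ha; exact absurd ha (Finset.notMem_empty a)
  rw [Function.update_of_ne he1] at ha hb
  refine ⟨e1, a, b, ha, hb, hab, n, x, f, hx0, hxn, fun k hk => ?_⟩
  obtain ⟨h1, h2, h3⟩ := hx k hk
  have hf : f k ≠ e0 := by
    intro h; rw [h, Function.update_self] at h2; exact absurd h2 (Finset.notMem_empty _)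
  rw [Function.update_of_ne hf] at h2 h3
  exact ⟨h1, h2, h3⟩

end Part2
section Part3

variable {V E : Type*}

theorem cycHelp_of_hasSimpleCycle {H : E → Finset V} (h : HasSimpleCycle H) : CycHelp H := by
  obtain ⟨ℓ, hℓ, v, e, hlast, hvinj, heinj, hstep⟩ := h
  have h0 : (0 : ℕ) < ℓ := by omega
  have h1 : (1 : ℕ) < ℓ := by omega
  refine ⟨e ⟨0, h0⟩, v (⟨0, h0⟩ : Fin ℓ).castSucc, v (⟨0, h0⟩ : Fin ℓ).succ,
    (hstep ⟨0, h0⟩).1, (hstep ⟨0, h0⟩).2, ?_, ?_⟩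
  · intro hc
    have : (⟨0, h0⟩ : Fin ℓ).succ = (⟨1, h1⟩ : Fin ℓ).castSucc := by
      simp [Fin.ext_iff]
    rw [this] at hc
    have := hvinj _ _ hc
    simp [Fin.ext_iff] at this
  · -- path from v 0.succ back to v 0.castSucc of length ℓ - 1, reversed
    refine ⟨ℓ - 1, gp_rev ⟨fun k => v ⟨min (k + 1) ℓ, by omega⟩,
      fun k => e ⟨min (k + 1) (ℓ - 1), by omega⟩, ?_, ?_, fun k hk => ?_⟩⟩
    · congr 1
      simp [Fin.ext_iff]
      exact congrArg v (Fin.ext (min_eq_left (by omega)))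
    · have : min (ℓ - 1 + 1) ℓ = ℓ := by omega
      simp only [this]
      have h2 : (⟨ℓ, by omega⟩ : Fin (ℓ + 1)) = Fin.last ℓ := by simp [Fin.ext_iff]
      rw [h2, hlast]
      all_goals (congr 1; all_goals simp [Fin.ext_iff])
    · have hm1 : min (k + 1) (ℓ - 1) = k + 1 := by omega
      have hm2 : min (k + 1) ℓ = k + 1 := by omega
      have hm3 : min (k + 1 + 1) ℓ = k + 2 := by omega
      simp only [hm1, hm2, hm3]
      refine ⟨fun hc => ?_, ?_, ?_⟩
      · have := heinj hc
        simp [Fin.ext_iff] at this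
      · have := (hstep ⟨k + 1, by omega⟩).1
        simpa [Fin.castSucc, Fin.ext_iff] using this
      · have := (hstep ⟨k + 1, by omega⟩).2
        have hs : (⟨k + 1, by omega⟩ : Fin ℓ).succ = ⟨k + 2, by omega⟩ := by
          simp [Fin.ext_iff]
        rw [hs] at this
        exact this

theorem hasSimpleCycle_of_cycHelp {H : E → Finset V} (h : CycHelp H) : HasSimpleCycle H := by
  classical
  obtain ⟨e0, a, b, ha, hb, hab, hex⟩ := h
  set n := Nat.find hex with hn
  obtain ⟨x, f, hx0, hxn, hx⟩ : GoodPath H e0 a b n := Nat.find_spec hex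
  have hn1 : 1 ≤ n := by
    rcases Nat.eq_zero_or_pos n with h | h
    · exfalso; apply hab; rw [← hx0, ← hxn, h]
    · exact h
  -- vertex injectivity on [0, n]
  have vinj : ∀ i j, i < j → j ≤ n → x i ≠ x j := by
    intro i j hij hjn hc
    have p1 : GoodPath H e0 a (x i) i := by
      have := gp_sub hx (Nat.zero_le i) (by omega)
      simpa [hx0] using this
    have p2 : GoodPath H e0 (x i) b (n - j) := by
      have := gp_sub hx hjn le_rfl
      rw [← hc] at this
      simpa [hxn] using this
    exact Nat.find_min hex (show i + (n - j) < n by omega) (gp_glue p1 p2)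
  -- edge injectivity on [0, n)
  have finj : ∀ p q, p < q → q < n → f p ≠ f q := by
    intro p q hpq hqn hc
    have p1 : GoodPath H e0 a (x p) p := by
      have := gp_sub hx (Nat.zero_le p) (by omega)
      simpa [hx0] using this
    have p2 : GoodPath H e0 (x p) (x (q + 1)) 1 := by
      refine gp_single (hx p (by omega)).1 (hx p (by omega)).2.1 ?_
      rw [hc]
      exact (hx q hqn).2.2
    have p3 : GoodPath H e0 (x (q + 1)) b (n - (q + 1)) := by
      have := gp_sub hx (show q + 1 ≤ n by omega) le_rfl
      simpa [hxn] using this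
    have := gp_glue p1 (gp_glue p2 p3)
    exact Nat.find_min hex (show p + (1 + (n - (q + 1))) < n by omega) this
  refine ⟨n + 1, by omega, fun k => if (k : ℕ) ≤ n then x k else a,
    fun k => if h : (k : ℕ) < n then f k else e0, ?_, ?_, ?_, ?_⟩
  · simp [Fin.last]
    rw [hx0]
  · intro k k' hkk
    have hk : ((k.castSucc : Fin (n + 2)) : ℕ) = (k : ℕ) := rfl
    have hk' : ((k'.castSucc : Fin (n + 2)) : ℕ) = (k' : ℕ) := rfl
    have hkn : (k : ℕ) ≤ n := by omega
    have hk'n : (k' : ℕ) ≤ n := by omega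
    simp only [hk, hk', hkn, hk'n, if_true] at hkk
    by_contra hne
    rcases Nat.lt_or_ge (k : ℕ) (k' : ℕ) with h | h
    · exact vinj _ _ h hk'n hkk
    · have h' : (k' : ℕ) < (k : ℕ) := by
        rcases Nat.lt_or_ge (k' : ℕ) (k : ℕ) with h2 | h2
        · exact h2
        · exfalso; apply hne; exact Fin.ext (by omega)
      exact vinj _ _ h' hkn hkk.symm
  · intro k k' hkk
    by_cases h : (k : ℕ) < n <;> by_cases h' : (k' : ℕ) < n <;>
      simp only [h, h', dif_pos, dif_neg, not_false_iff] at hkk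
    · by_contra hne
      rcases Nat.lt_or_ge (k : ℕ) (k' : ℕ) with h2 | h2
      · exact finj _ _ h2 h' hkk
      · rcases Nat.lt_or_ge (k' : ℕ) (k : ℕ) with h3 | h3
        · exact finj _ _ h3 h hkk.symm
        · exact hne (Fin.ext (by omega))
    · exact absurd hkk (hx k h).1
    · exact absurd hkk.symm (hx k' h').1
    · have hkn : (k : ℕ) = n := by omega
      have hk'n : (k' : ℕ) = n := by omega
      exact Fin.ext (by omega)
  · intro k
    have hc : ((k.castSucc : Fin (n + 2)) : ℕ) = (k : ℕ) := rfl
    have hs : ((k.succ : Fin (n + 2)) : ℕ) = (k : ℕ) + 1 := rfl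
    by_cases h : (k : ℕ) < n
    · have h1 : (k : ℕ) ≤ n := by omega
      have h2 : (k : ℕ) + 1 ≤ n := by omega
      simp only [hc, hs, h, h1, h2, if_true, dif_pos]
      exact ⟨(hx k h).2.1, (hx k h).2.2⟩
    · have hkn : (k : ℕ) = n := by omega
      have h2 : ¬ ((k : ℕ) + 1 ≤ n) := by omega
      simp only [hc, hs, h, hkn, le_refl, if_true, h2, if_false, dif_neg, not_false_iff]
      rw [hxn, dif_neg (lt_irrefl n), if_neg (show ¬ (n + 1 ≤ n) by omega)]
      exact ⟨hb, ha⟩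

end Part3
section Part4

variable {V E : Type*}

theorem hstep_mono {H : E → Finset V} [DecidableEq E] {e0 : E} :
    ∀ u w, HStep (Function.update H e0 ∅) u w → HStep H u w := by
  rintro u w ⟨e, hu, hw⟩
  rcases eq_or_ne e e0 with h | h
  · rw [h, Function.update_self] at hu; exact absurd hu (Finset.notMem_empty u)
  · rw [Function.update_of_ne h] at hu hw; exact ⟨e, hu, hw⟩

/-- Key decomposition of connectivity in `H` versus `H` with `e0` deleted. -/
theorem eqvGen_decomp {H : E → Finset V} [DecidableEq E] {e0 : E} {u w : V}
    (h : Relation.EqvGen (HStep H) u w) :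
    Relation.EqvGen (HStep (Function.update H e0 ∅)) u w ∨
      ((∃ a ∈ H e0, Relation.EqvGen (HStep (Function.update H e0 ∅)) u a) ∧
       (∃ b ∈ H e0, Relation.EqvGen (HStep (Function.update H e0 ∅)) w b)) := by
  induction h with
  | rel x y hxy =>
    obtain ⟨e, hx, hy⟩ := hxy
    rcases eq_or_ne e e0 with h | h
    · subst h
      exact Or.inr ⟨⟨x, hx, Relation.EqvGen.refl x⟩, ⟨y, hy, Relation.EqvGen.refl y⟩⟩
    · exact Or.inl (Relation.EqvGen.rel _ _ ⟨e, by rw [Function.update_of_ne h]; exact ⟨hx, hy⟩⟩)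
  | refl x => exact Or.inl (Relation.EqvGen.refl x)
  | symm x y _ ih =>
    rcases ih with h | ⟨h1, h2⟩
    · exact Or.inl (Relation.EqvGen.symm _ _ h)
    · exact Or.inr ⟨h2, h1⟩
  | trans x y z hxy hyz ih1 ih2 =>
    rcases ih1 with h1 | ⟨h1a, h1b⟩ <;> rcases ih2 with h2 | ⟨h2a, h2b⟩
    · exact Or.inl (Relation.EqvGen.trans _ _ _ h1 h2)
    · obtain ⟨a, ha, hya⟩ := h2a
      exact Or.inr ⟨⟨a, ha, Relation.EqvGen.trans _ _ _ h1 hya⟩, h2b⟩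
    · obtain ⟨b, hb, hyb⟩ := h1b
      exact Or.inr ⟨h1a, ⟨b, hb, Relation.EqvGen.trans _ _ _ (Relation.EqvGen.symm _ _ h2) hyb⟩⟩
    · exact Or.inr ⟨h1a, h2b⟩

theorem master [Fintype V] [DecidableEq E] (H : E → Finset V) (e0 : E)
    (hne : (H e0).Nonempty) :
    ∃ t : ℕ, 1 ≤ t ∧ t ≤ (H e0).card ∧
      Nat.card (Quot (HStep (Function.update H e0 ∅))) + 1
        = Nat.card (Quot (HStep H)) + t ∧
      ((∀ a ∈ H e0, ∀ b ∈ H e0, a ≠ b →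
          ¬ Relation.EqvGen (HStep (Function.update H e0 ∅)) a b) → t = (H e0).card) ∧
      (∀ a ∈ H e0, ∀ b ∈ H e0, a ≠ b →
          Relation.EqvGen (HStep (Function.update H e0 ∅)) a b → t + 1 ≤ (H e0).card) := by
  classical
  set H' := Function.update H e0 ∅ with hH'
  set r := HStep H' with hr
  set r' := HStep H with hr'
  letI : Fintype (Quot r) := Fintype.ofFinite _
  letI : Fintype (Quot r') := Fintype.ofFinite _
  set T : Finset (Quot r) := (H e0).image (Quot.mk r) with hT
  set π : Quot r → Quot r' := Quot.map id (by exact fun u w h => hstep_mono u w h) with hπ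
  have hπmk : ∀ u : V, π (Quot.mk r u) = Quot.mk r' u := fun u => rfl
  have hsurj : Function.Surjective π := by
    intro z
    obtain ⟨u, rfl⟩ := Quot.exists_rep z
    exact ⟨Quot.mk r u, rfl⟩
  -- F1
  have F1 : ∀ x y : Quot r, π x = π y → x ≠ y → x ∈ T ∧ y ∈ T := by
    intro x y
    induction x using Quot.ind with | _ u =>
    induction y using Quot.ind with | _ w =>
    intro hxy hne'
    rw [hπmk, hπmk] at hxy
    have h := Quot.eqvGen_exact hxy
    rcases eqvGen_decomp (e0 := e0) h with h | ⟨⟨a, ha, hua⟩, ⟨b, hb, hwb⟩⟩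
    · exact absurd (Quot.eqvGen_sound h) hne'
    · constructor
      · rw [show Quot.mk r u = Quot.mk r a from Quot.eqvGen_sound hua]
        exact Finset.mem_image_of_mem _ ha
      · rw [show Quot.mk r w = Quot.mk r b from Quot.eqvGen_sound hwb]
        exact Finset.mem_image_of_mem _ hb
  -- F2
  have F2 : ∀ x ∈ T, ∀ y ∈ T, π x = π y := by
    intro x hx y hy
    obtain ⟨a, ha, rfl⟩ := Finset.mem_image.mp hx
    obtain ⟨b, hb, rfl⟩ := Finset.mem_image.mp hy
    rw [hπmk, hπmk]
    exact Quot.sound ⟨e0, ha, hb⟩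
  obtain ⟨s0, hs0⟩ := hne
  set t0 : Quot r := Quot.mk r s0 with ht0
  have ht0T : t0 ∈ T := Finset.mem_image_of_mem _ hs0
  set B : Finset (Quot r) := insert t0 (Finset.univ \ T) with hB
  have hinj : Set.InjOn π B := by
    intro x hx y hy hxy
    by_contra hne'
    obtain ⟨hxT, hyT⟩ := F1 x y hxy hne'
    simp only [hB, Finset.coe_insert, Set.mem_insert_iff, Finset.coe_sdiff,
      Finset.coe_univ, Set.mem_diff, Set.mem_univ, true_and, Finset.mem_coe] at hx hy
    rcases hx with rfl | hx
    · rcases hy with rfl | hy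
      · exact hne' rfl
      · exact hy hyT
    · exact hx hxT
  have himg : B.image π = Finset.univ := by
    apply Finset.eq_univ_of_forall
    intro z
    obtain ⟨x, rfl⟩ := hsurj z
    by_cases hx : x ∈ T
    · rw [F2 x hx t0 ht0T]
      exact Finset.mem_image_of_mem _ (Finset.mem_insert_self _ _)
    · exact Finset.mem_image_of_mem _ (Finset.mem_insert_of_mem (by simp [hx]))
  have hcard1 : Fintype.card (Quot r') = B.card := by
    rw [← Finset.card_univ, ← himg, Finset.card_image_of_injOn hinj]
  have hcard2 : B.card = (Finset.univ \ T).card + 1 := by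
    rw [hB, Finset.card_insert_of_notMem (by simp [ht0T])]
  have hcard3 : (Finset.univ \ T).card = Fintype.card (Quot r) - T.card := by
    rw [Finset.card_sdiff_of_subset (Finset.subset_univ T), Finset.card_univ]
  have hTle : T.card ≤ Fintype.card (Quot r) := by
    rw [← Finset.card_univ]; exact Finset.card_le_card (Finset.subset_univ T)
  refine ⟨T.card, ?_, Finset.card_image_le, ?_, ?_, ?_⟩
  · exact Finset.card_pos.mpr ⟨t0, ht0T⟩
  · rw [Nat.card_eq_fintype_card, Nat.card_eq_fintype_card, hcard1, hcard2, hcard3]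
    omega
  · intro hdis
    rw [hT]
    apply Finset.card_image_of_injOn
    intro a ha b hb hab
    by_contra hne'
    exact hdis a ha b hb hne' (Quot.eqvGen_exact hab)
  · intro a ha b hb hab hcon
    have hsub : T ⊆ ((H e0).erase b).image (Quot.mk r) := by
      intro x hx
      obtain ⟨s, hs, rfl⟩ := Finset.mem_image.mp hx
      rcases eq_or_ne s b with rfl | hsb
      · rw [show Quot.mk r s = Quot.mk r a from (Quot.eqvGen_sound hcon).symm]
        exact Finset.mem_image_of_mem _ (Finset.mem_erase.mpr ⟨hab, ha⟩)
      · exact Finset.mem_image_of_mem _ (Finset.mem_erase.mpr ⟨hsb, hs⟩)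
    have h1 : T.card ≤ ((H e0).erase b).card :=
      (Finset.card_le_card hsub).trans Finset.card_image_le
    have h2 : ((H e0).erase b).card = (H e0).card - 1 := Finset.card_erase_of_mem hb
    have h3 : 1 ≤ (H e0).card := Finset.card_pos.mpr ⟨b, hb⟩
    omega
  -- leftover? none

end Part4
section Part5

variable {V E : Type*}

theorem base_case [Fintype V] (H : E → Finset V) (h : ∀ e, H e = ∅) :
    Nat.card (Quot (HStep H)) = Fintype.card V := by
  rw [← Nat.card_eq_fintype_card]
  symm
  apply Nat.card_eq_of_bijective (Quot.mk (HStep H))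
  refine ⟨fun u w huw => ?_, Quot.exists_rep⟩
  have := Quot.eqvGen_exact huw
  induction this with
  | rel x y hxy =>
    obtain ⟨e, hx, _⟩ := hxy
    rw [h e] at hx
    exact absurd hx (Finset.notMem_empty x)
  | refl x => rfl
  | symm x y hxy ih => exact (ih (Quot.eqvGen_sound hxy)).symm
  | trans x y z h1 h2 ih1 ih2 =>
    exact (ih1 (Quot.eqvGen_sound h1)).trans (ih2 (Quot.eqvGen_sound h2))

theorem sum_update [Fintype E] [DecidableEq E] (g : E → ℕ) (e0 : E) :
    ∑ e : E, Function.update g e0 0 e + g e0 = ∑ e : E, g e := by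
  rw [Finset.sum_update_of_mem (Finset.mem_univ e0)]
  rw [← Finset.sum_erase_add Finset.univ g (Finset.mem_univ e0)]
  simp [Finset.sdiff_singleton_eq_erase]
  try ring

theorem update_card_eq [DecidableEq E] (H : E → Finset V) (e0 : E) :
    (fun e => ((Function.update H e0 ∅ : E → Finset V) e).card)
      = Function.update (fun e => (H e).card) e0 0 := by
  funext e
  rcases eq_or_ne e e0 with rfl | h
  · simp
  · simp [Function.update_of_ne h]

theorem update_card_sub_eq [DecidableEq E] (H : E → Finset V) (e0 : E) :
    (fun e => ((Function.update H e0 ∅ : E → Finset V) e).card - 1)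
      = Function.update (fun e => (H e).card - 1) e0 0 := by
  funext e
  rcases eq_or_ne e e0 with rfl | h
  · simp
  · simp [Function.update_of_ne h]

theorem lemA [Fintype V] [Fintype E] [DecidableEq E] (N : ℕ) :
    ∀ H : E → Finset V, (∑ e : E, (H e).card) ≤ N →
      Fintype.card V ≤ (∑ e : E, ((H e).card - 1)) + Nat.card (Quot (HStep H)) := by
  induction N using Nat.strong_induction_on with
  | _ N ih =>
    intro H hN
    by_cases hall : ∀ e, H e = ∅
    · rw [base_case H hall]
      omega
    · push_neg at hall
      obtain ⟨e0, he0⟩ := hall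
      have hne : (H e0).Nonempty := he0
      have hk : 1 ≤ (H e0).card := Finset.card_pos.mpr hne
      obtain ⟨t, ht1, htk, hcount, _, _⟩ := master H e0 hne
      set H' := Function.update H e0 ∅ with hH'
      have hsum1 : (∑ e : E, (H' e).card) + (H e0).card = ∑ e : E, (H e).card := by
        rw [hH']
        conv_lhs => rw [show (fun e => ((Function.update H e0 ∅ : E → Finset V) e).card)
          = Function.update (fun e => (H e).card) e0 0 from update_card_eq H e0]
        exact sum_update _ e0
      have hsum2 : (∑ e : E, ((H' e).card - 1)) + ((H e0).card - 1)
          = ∑ e : E, ((H e).card - 1) := by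
        rw [hH']
        conv_lhs => rw [show (fun e => ((Function.update H e0 ∅ : E → Finset V) e).card - 1)
          = Function.update (fun e => (H e).card - 1) e0 0 from update_card_sub_eq H e0]
        exact sum_update _ e0
      have hNpos : 1 ≤ N := le_trans (le_trans hk (Finset.single_le_sum
        (f := fun e => (H e).card) (fun _ _ => Nat.zero_le _) (Finset.mem_univ e0))) hN
      have hmeas : (∑ e : E, (H' e).card) ≤ N - 1 := by omega
      have hA := ih (N - 1) (by omega) H' hmeas
      omega

theorem lemB [Fintype V] [Fintype E] [DecidableEq E] (N : ℕ) :
    ∀ H : E → Finset V, (∑ e : E, (H e).card) ≤ N → ¬ CycHelp H →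
      (∑ e : E, ((H e).card - 1)) + Nat.card (Quot (HStep H)) ≤ Fintype.card V := by
  induction N using Nat.strong_induction_on with
  | _ N ih =>
    intro H hN hnc
    by_cases hall : ∀ e, H e = ∅
    · rw [base_case H hall]
      have : ∀ e : E, (H e).card - 1 = 0 := fun e => by rw [hall e]; simp
      rw [Finset.sum_congr rfl (fun e _ => this e), Finset.sum_const_zero]
      omega
    · push_neg at hall
      obtain ⟨e0, he0⟩ := hall
      have hne : (H e0).Nonempty := he0
      have hk : 1 ≤ (H e0).card := Finset.card_pos.mpr hne
      obtain ⟨t, ht1, htk, hcount, hfull, _⟩ := master H e0 hne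
      have ht : t = (H e0).card := by
        apply hfull
        intro a ha b hb hab hcon
        exact hnc ⟨e0, a, b, ha, hb, hab, eqvGen_iff_goodPath.mp hcon⟩
      set H' := Function.update H e0 ∅ with hH'
      have hnc' : ¬ CycHelp H' := fun h => hnc (cycHelp_mono h)
      have hsum1 : (∑ e : E, (H' e).card) + (H e0).card = ∑ e : E, (H e).card := by
        rw [hH']
        conv_lhs => rw [show (fun e => ((Function.update H e0 ∅ : E → Finset V) e).card)
          = Function.update (fun e => (H e).card) e0 0 from update_card_eq H e0]
        exact sum_update _ e0
      have hsum2 : (∑ e : E, ((H' e).card - 1)) + ((H e0).card - 1)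
          = ∑ e : E, ((H e).card - 1) := by
        rw [hH']
        conv_lhs => rw [show (fun e => ((Function.update H e0 ∅ : E → Finset V) e).card - 1)
          = Function.update (fun e => (H e).card - 1) e0 0 from update_card_sub_eq H e0]
        exact sum_update _ e0
      have hNpos : 1 ≤ N := le_trans (le_trans hk (Finset.single_le_sum
        (f := fun e => (H e).card) (fun _ _ => Nat.zero_le _) (Finset.mem_univ e0))) hN
      have hmeas : (∑ e : E, (H' e).card) ≤ N - 1 := by omega
      have hB := ih (N - 1) (by omega) H' hmeas hnc'
      omega

end Part5

/-- A finite hypergraph has a simple cycle iff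
`e(G) + (number of connected components) ≥ v(G) + 1`. -/
theorem hasSimpleCycle_iff {V E : Type*} [Fintype V] [Fintype E]
    (H : E → Finset V) (hcard : ∀ e, 2 ≤ (H e).card) :
    HasSimpleCycle H ↔
      Fintype.card V + 1 ≤ (∑ e : E, ((H e).card - 1)) + Nat.card (Quot (HStep H)) := by
  classical
  constructor
  · intro h
    obtain ⟨e0, a, b, ha, hb, hab, hgp⟩ := cycHelp_of_hasSimpleCycle h
    have hcon : Relation.EqvGen (HStep (Function.update H e0 ∅)) a b :=
      eqvGen_iff_goodPath.mpr hgp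
    have hne : (H e0).Nonempty := ⟨a, ha⟩
    have hk : 1 ≤ (H e0).card := Finset.card_pos.mpr hne
    obtain ⟨t, ht1, htk, hcount, _, hlt⟩ := master H e0 hne
    have ht : t + 1 ≤ (H e0).card := hlt a ha b hb hab hcon
    set H' := Function.update H e0 ∅ with hH'
    have hsum2 : (∑ e : E, ((H' e).card - 1)) + ((H e0).card - 1)
        = ∑ e : E, ((H e).card - 1) := by
      rw [hH']
      conv_lhs => rw [show (fun e => ((Function.update H e0 ∅ : E → Finset V) e).card - 1)
        = Function.update (fun e => (H e).card - 1) e0 0 from update_card_sub_eq H e0]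
      exact sum_update _ e0
    have hA := lemA (∑ e : E, (H' e).card) H' le_rfl
    omega
  · intro hle
    by_contra hnc
    have hnc' : ¬ CycHelp H := fun h => hnc (hasSimpleCycle_of_cycHelp h)
    have := lemB (∑ e : E, (H e).card) H le_rfl hnc'
    omega
end

section
/- For any N × N tw-matrix A (total weight N) there exist real numbers r_1, …, r_M and c_1, …, c_N such that the tw-matrix B with entries B_{ij} = A_{ij} + r_i + c_j (and the same weights) has all entries ≥ 0 and has tw-permanent equal to 0. -/
/-- An ordered partition of the column set `Fin N` into blocks of sizes `m i`. -/
def IsTWPartition {M N : ℕ} (m : Fin M → ℕ) (P : Fin M → Finset (Fin N)) : Prop :=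
  (∀ i, (P i).card = m i) ∧ ∀ j : Fin N, ∃! i, j ∈ P i

/-- The sum `Σ_i Σ_{j ∈ I_i} A_{ij}` associated to an ordered partition. -/
def partSum {M N : ℕ} (A : Fin M → Fin N → ℝ) (P : Fin M → Finset (Fin N)) : ℝ :=
  ∑ i, ∑ j ∈ P i, A i j

/-- The tw-permanent: the minimum of `partSum` over all ordered partitions. -/
noncomputable def twPerm {M N : ℕ} (m : Fin M → ℕ) (A : Fin M → Fin N → ℝ) : ℝ :=
  sInf (partSum A '' {P | IsTWPartition m P})

lemma twPerm_eq_zero_of {M N : ℕ} (m : Fin M → ℕ) (B : Fin M → Fin N → ℝ)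
    (hB : ∀ i j, 0 ≤ B i j) (P : Fin M → Finset (Fin N))
    (hP : IsTWPartition m P) (hz : ∀ i, ∀ j ∈ P i, B i j = 0) :
    twPerm m B = 0 := by
  have h0 : partSum B P = 0 :=
    Finset.sum_eq_zero fun i _ => Finset.sum_eq_zero (hz i)
  have hmem : (0:ℝ) ∈ partSum B '' {Q | IsTWPartition m Q} := ⟨P, hP, h0⟩
  have hlb : ∀ y ∈ partSum B '' {Q | IsTWPartition m Q}, (0:ℝ) ≤ y := by
    rintro y ⟨Q, hQ, rfl⟩
    exact Finset.sum_nonneg fun i _ => Finset.sum_nonneg fun j _ => hB i j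
  exact le_antisymm (csInf_le ⟨0, hlb⟩ hmem) (le_csInf ⟨0, hmem⟩ hlb)

lemma partition_of_injective {M N : ℕ} (m : Fin M → ℕ) (hw : ∑ i, m i = N)
    (f : (Σ i : Fin M, Fin (m i)) → Fin N) (hf : Function.Injective f) :
    ∃ P : Fin M → Finset (Fin N), IsTWPartition m P ∧
      ∀ i j, j ∈ P i → ∃ k, f ⟨i, k⟩ = j := by
  classical
  have hcard : Fintype.card (Σ i : Fin M, Fin (m i)) = Fintype.card (Fin N) := by
    simp [Fintype.card_sigma, hw]
  have hbij : Function.Bijective f :=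
    (Fintype.bijective_iff_injective_and_card f).2 ⟨hf, hcard⟩
  refine ⟨fun i => Finset.univ.image (fun k : Fin (m i) => f ⟨i, k⟩), ⟨?_, ?_⟩, ?_⟩
  · intro i
    rw [Finset.card_image_of_injective _ (fun k k' h => sigma_mk_injective (hf h))]
    simp
  · intro j
    obtain ⟨x, hx⟩ := hbij.2 j
    refine ⟨x.1, ?_, ?_⟩
    · exact Finset.mem_image.2 ⟨x.2, Finset.mem_univ _, by rw [← hx]⟩
    · intro i' hi'
      obtain ⟨k', _, hk'⟩ := Finset.mem_image.1 hi'
      have : (⟨i', k'⟩ : Σ i, Fin (m i)) = x := hf (by rw [hk', hx])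
      exact congrArg Sigma.fst this
  · intro i j hj
    obtain ⟨k, _, hk⟩ := Finset.mem_image.1 hj
    exact ⟨k, hk⟩

set_option maxHeartbeats 1000000 in
/-- Any `N × N` tw-matrix can be rescaled, by adding constants `r i` to the rows and
`c j` to the columns, so that all entries are nonnegative and the tw-permanent is `0`. -/
theorem exists_rescaling_nonneg_twPerm_zero {M N : ℕ}
    (m : Fin M → ℕ) (A : Fin M → Fin N → ℝ)
    (hm : ∀ i, 1 ≤ m i) (hw : ∑ i, m i = N) :
    ∃ (r : Fin M → ℝ) (c : Fin N → ℝ),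
      (∀ i j, 0 ≤ A i j + r i + c j) ∧
        twPerm m (fun i j => A i j + r i + c j) = 0 := by
  classical
  rcases Nat.eq_zero_or_pos M with hM | hM
  · subst hM
    have hN : N = 0 := by simpa using hw.symm
    subst hN
    exact ⟨fun i => 0, fun j => 0, fun i => i.elim0,
      twPerm_eq_zero_of _ _ (fun i => i.elim0) (fun _ => ∅)
        ⟨fun i => i.elim0, fun j => j.elim0⟩ (fun i => i.elim0)⟩
  · set i0 : Fin M := ⟨0, hM⟩ with hi0def
    have hN : 0 < N := by
      have h1 : m i0 ≤ ∑ i, m i :=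
        Finset.single_le_sum (fun i _ => Nat.zero_le _) (Finset.mem_univ i0)
      have h2 := hm i0
      omega
    obtain ⟨α, hα0, hα⟩ : ∃ α : ℝ, 0 ≤ α ∧ ∀ i j, |A i j| ≤ α := by
      obtain ⟨C, hC⟩ := Finite.exists_le (fun p : Fin M × Fin N => |A p.1 p.2|)
      exact ⟨max C 0, le_max_right _ _, fun i j => le_trans (hC (i, j)) (le_max_left _ _)⟩
    have hαb : ∀ i j, -α ≤ A i j ∧ A i j ≤ α := fun i j => abs_le.1 (hα i j)
    set φ : (Fin M → ℝ) × (Fin N → ℝ) → ℝ :=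
      fun x => (∑ i, (m i : ℝ) * x.1 i) + ∑ j, x.2 j with hφdef
    set φ0 : ℝ := 2 * N * α with hφ0def
    set Bd : ℝ := 3 * N * α + 3 * N * N * α with hBddef
    have hNcast : (∑ i, (m i : ℝ)) = (N : ℝ) := by exact_mod_cast congrArg (Nat.cast : ℕ → ℝ) hw
    set K : Set ((Fin M → ℝ) × (Fin N → ℝ)) :=
      {x | (∀ i j, 0 ≤ A i j + x.1 i + x.2 j) ∧ φ x ≤ φ0 ∧ x.1 i0 = 0} with hKdef
    have hKne : K.Nonempty := by
      refine ⟨(fun _ => 0, fun _ => 2 * α), fun i j => ?_, ?_, rfl⟩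
      · have := (hαb i j).1; simp; linarith
      · simp [hφdef, hφ0def, Finset.sum_const, nsmul_eq_mul]
        ring_nf
        simp
    have hφc : Continuous φ := by
      apply Continuous.add
      · exact continuous_finset_sum _ fun i _ =>
          continuous_const.mul ((continuous_apply i).comp continuous_fst)
      · exact continuous_finset_sum _ fun j _ => (continuous_apply j).comp continuous_snd
    have hKc : IsClosed K := by
      have h1 : IsClosed {x : (Fin M → ℝ) × (Fin N → ℝ) | ∀ i j, 0 ≤ A i j + x.1 i + x.2 j} := by
        rw [Set.setOf_forall]
        refine isClosed_iInter fun i => ?_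
        rw [Set.setOf_forall]
        refine isClosed_iInter fun j => ?_
        exact isClosed_le continuous_const
          ((continuous_const.add ((continuous_apply i).comp continuous_fst)).add
            ((continuous_apply j).comp continuous_snd))
      have h2 : IsClosed {x : (Fin M → ℝ) × (Fin N → ℝ) | φ x ≤ φ0} :=
        isClosed_le hφc continuous_const
      have h3 : IsClosed {x : (Fin M → ℝ) × (Fin N → ℝ) | x.1 i0 = 0} :=
        isClosed_eq ((continuous_apply i0).comp continuous_fst) continuous_const
      have : K = {x | ∀ i j, 0 ≤ A i j + x.1 i + x.2 j} ∩
          ({x | φ x ≤ φ0} ∩ {x | x.1 i0 = 0}) := by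
        ext x
        simp only [hKdef, Set.mem_setOf_eq, Set.mem_inter_iff]
      rw [this]
      exact h1.inter (h2.inter h3)
    -- bounds
    have key : ∀ x ∈ K, (∀ i, -Bd ≤ x.1 i ∧ x.1 i ≤ Bd) ∧ (∀ j, -Bd ≤ x.2 j ∧ x.2 j ≤ Bd) := by
      rintro ⟨r, c⟩ ⟨hfeas, hφle, hr0⟩
      simp only at hfeas hφle hr0 ⊢
      have hφle' : (∑ i, (m i : ℝ) * r i) + (∑ j, c j) ≤ 2 * N * α := hφle
      have hrc : ∀ i j, -α ≤ r i + c j := by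
        intro i j; have := hfeas i j; have := (hαb i j).2; linarith
      have hclo : ∀ j, -α ≤ c j := by
        intro j; have := hrc i0 j; rw [hr0] at this; linarith
      obtain ⟨istar, -, histar⟩ :=
        Finset.exists_min_image Finset.univ r ⟨i0, Finset.mem_univ i0⟩
      have ha0 : r istar ≤ 0 := le_of_le_of_eq (histar i0 (Finset.mem_univ i0)) hr0
      have hca : ∀ j, -α - r istar ≤ c j := by
        intro j; have := hrc istar j; linarith
      have hSc_lb : (N : ℝ) * (-α - r istar) ≤ ∑ j, c j := by
        calc (N : ℝ) * (-α - r istar) = ∑ _j : Fin N, (-α - r istar) := by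
              simp [Finset.sum_const, nsmul_eq_mul]; ring
        _ ≤ ∑ j, c j := Finset.sum_le_sum fun j _ => hca j
      have hErase : ∀ i : Fin M, (∑ i' ∈ Finset.univ.erase i, (m i' : ℝ)) = (N : ℝ) - m i := by
        intro i
        have := Finset.sum_erase_add Finset.univ (fun i' => (m i' : ℝ)) (Finset.mem_univ i)
        rw [hNcast] at this
        linarith
      have hSr_lb : ((N : ℝ) - m i0) * r istar ≤ ∑ i, (m i : ℝ) * r i := by
        have h1 : ∑ i' ∈ Finset.univ.erase i0, (m i' : ℝ) * r istar ≤
            ∑ i' ∈ Finset.univ.erase i0, (m i' : ℝ) * r i' :=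
          Finset.sum_le_sum fun i' _ =>
            mul_le_mul_of_nonneg_left (histar i' (Finset.mem_univ i')) (Nat.cast_nonneg _)
        rw [← Finset.sum_mul, hErase i0] at h1
        have h2 : ∑ i' ∈ Finset.univ.erase i0, (m i' : ℝ) * r i' + (m i0 : ℝ) * r i0
            = ∑ i, (m i : ℝ) * r i :=
          Finset.sum_erase_add Finset.univ (fun i' => (m i' : ℝ) * r i') (Finset.mem_univ i0)
        rw [hr0, mul_zero, add_zero] at h2
        linarith
      have hmi0 : (1 : ℝ) ≤ (m i0 : ℝ) := by exact_mod_cast hm i0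
      have hmi0N : (m i0 : ℝ) ≤ (N : ℝ) := by
        have : m i0 ≤ N := hw ▸ Finset.single_le_sum (fun i _ => Nat.zero_le _) (Finset.mem_univ i0)
        exact_mod_cast this
      have hNα : (0:ℝ) ≤ (N:ℝ) * α := mul_nonneg (Nat.cast_nonneg _) hα0
      have ha_lb : -(3 * N * α) ≤ r istar := by
        have h1 : (m i0 : ℝ) * r istar ≥ -(3 * (N:ℝ) * α) := by
          nlinarith [hφle', hSr_lb, hSc_lb]
        have hprod : 0 ≤ (-(r istar)) * ((m i0 : ℝ) - 1) :=
          mul_nonneg (neg_nonneg.2 ha0) (sub_nonneg.2 hmi0)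
        nlinarith [h1, hprod]
      have hrlo : ∀ i, -(3 * N * α) ≤ r i :=
        fun i => le_trans ha_lb (histar i (Finset.mem_univ i))
      have hSr_lb2 : (N : ℝ) * (-(3 * N * α)) ≤ ∑ i, (m i : ℝ) * r i := by
        calc (N : ℝ) * (-(3 * N * α)) = (∑ i, (m i : ℝ)) * (-(3 * N * α)) := by rw [hNcast]
        _ = ∑ i, (m i : ℝ) * (-(3 * N * α)) := Finset.sum_mul ..
        _ ≤ ∑ i, (m i : ℝ) * r i :=
            Finset.sum_le_sum fun i _ => mul_le_mul_of_nonneg_left (hrlo i) (Nat.cast_nonneg _)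
      have hSc_lb2 : (N : ℝ) * (-α) ≤ ∑ j, c j := by
        calc (N : ℝ) * (-α) = ∑ _j : Fin N, (-α) := by simp [Finset.sum_const, nsmul_eq_mul]
        _ ≤ ∑ j, c j := Finset.sum_le_sum fun j _ => hclo j
    -- upper bound on r i
      have hrhi : ∀ i, r i ≤ Bd := by
        intro i
        have hup : (m i : ℝ) * r i ≤ Bd := by
          have h2 : ∑ i' ∈ Finset.univ.erase i, (m i' : ℝ) * r i' + (m i : ℝ) * r i
              = ∑ i', (m i' : ℝ) * r i' :=
            Finset.sum_erase_add Finset.univ (fun i' => (m i' : ℝ) * r i') (Finset.mem_univ i)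
          have h3 : ∑ i' ∈ Finset.univ.erase i, (m i' : ℝ) * (-(3 * N * α)) ≤
              ∑ i' ∈ Finset.univ.erase i, (m i' : ℝ) * r i' :=
            Finset.sum_le_sum fun i' _ => mul_le_mul_of_nonneg_left (hrlo i') (Nat.cast_nonneg _)
          rw [← Finset.sum_mul, hErase i] at h3
          have hmi : (1:ℝ) ≤ (m i : ℝ) := by exact_mod_cast hm i
          have hmiN : (m i : ℝ) ≤ (N : ℝ) := by
            have : m i ≤ N := hw ▸ Finset.single_le_sum (fun i _ => Nat.zero_le _) (Finset.mem_univ i)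
            exact_mod_cast this
          rw [hBddef]
          nlinarith [hφle', hSc_lb2, h2, h3]
        rcases le_or_gt (r i) 0 with h | h
        · have hBd0 : (0:ℝ) ≤ Bd := by rw [hBddef]; positivity
          linarith
        · have hmi : (1:ℝ) ≤ (m i : ℝ) := by exact_mod_cast hm i
          nlinarith
      have hchi : ∀ j, c j ≤ Bd := by
        intro j
        have h2 : ∑ j' ∈ Finset.univ.erase j, c j' + c j = ∑ j', c j' :=
          Finset.sum_erase_add Finset.univ (fun j' => c j') (Finset.mem_univ j)
        have h3 : ∑ j' ∈ Finset.univ.erase j, (-α) ≤ ∑ j' ∈ Finset.univ.erase j, c j' :=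
          Finset.sum_le_sum fun j' _ => hclo j'
        have h4 : ∑ j' ∈ Finset.univ.erase j, (-α) = ((N:ℝ) - 1) * (-α) := by
          rw [Finset.sum_const, Finset.card_erase_of_mem (Finset.mem_univ j),
            Finset.card_univ, Fintype.card_fin, nsmul_eq_mul]
          push_cast [Nat.cast_sub (by omega : 1 ≤ N)]
          ring
        rw [hBddef]
        nlinarith [hφle', hSr_lb2, h2, h3, h4, hα0]
      refine ⟨fun i => ⟨?_, hrhi i⟩, fun j => ⟨?_, hchi j⟩⟩
      · have := hrlo i
        have : -Bd ≤ -(3 * N * α) := by rw [hBddef]; nlinarith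
        linarith [hrlo i]
      · have h1 : -Bd ≤ -α := by
          rw [hBddef]
          have : (1:ℝ) ≤ (N:ℝ) := by exact_mod_cast hN
          nlinarith
        linarith [hclo j]
    have hKb : K ⊆ Set.Icc ((fun _ => -Bd, fun _ => -Bd) : (Fin M → ℝ) × (Fin N → ℝ))
        (fun _ => Bd, fun _ => Bd) := by
      intro x hx
      obtain ⟨h1, h2⟩ := key x hx
      exact ⟨⟨fun i => (h1 i).1, fun j => (h2 j).1⟩, ⟨fun i => (h1 i).2, fun j => (h2 j).2⟩⟩
    have hKcompact : IsCompact K := IsCompact.of_isClosed_subset isCompact_Icc hKc hKb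
    obtain ⟨x, hxK, hxmin⟩ := hKcompact.exists_isMinOn hKne hφc.continuousOn
    obtain ⟨hfeas, hφle, hr0⟩ := hxK
    set B : Fin M → Fin N → ℝ := fun i j => A i j + x.1 i + x.2 j with hBdef
    have hBnn : ∀ i j, 0 ≤ B i j := hfeas
    set t : (Σ i : Fin M, Fin (m i)) → Finset (Fin N) :=
      fun p => Finset.univ.filter (fun j => B p.1 j = 0) with htdef
    have hall : ∀ s : Finset (Σ i : Fin M, Fin (m i)), s.card ≤ (s.biUnion t).card := by
      by_contra hcon
      push_neg at hcon
      obtain ⟨s, hs⟩ := hcon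
      set T : Finset (Fin M) := s.image Sigma.fst with hTdef
      set J : Finset (Fin N) := T.biUnion (fun i => Finset.univ.filter fun j => B i j = 0)
        with hJdef
      have hJeq : s.biUnion t = J := by
        ext j
        simp only [hJdef, hTdef, htdef, Finset.mem_biUnion, Finset.mem_image,
          Finset.mem_filter, Finset.mem_univ, true_and]
        constructor
        · rintro ⟨p, hp, hpj⟩; exact ⟨p.1, ⟨p, hp, rfl⟩, hpj⟩
        · rintro ⟨i, ⟨p, hp, rfl⟩, hij⟩; exact ⟨p, hp, hij⟩
      have hscard : s.card ≤ ∑ i ∈ T, m i := by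
        have hsub : s ⊆ T.sigma (fun i => (Finset.univ : Finset (Fin (m i)))) := fun p hp =>
          Finset.mem_sigma.2 ⟨Finset.mem_image_of_mem _ hp, Finset.mem_univ _⟩
        calc s.card ≤ (T.sigma fun i => (Finset.univ : Finset (Fin (m i)))).card :=
              Finset.card_le_card hsub
        _ = ∑ i ∈ T, m i := by rw [Finset.card_sigma]; simp
      have hJcard : J.card < ∑ i ∈ T, m i := lt_of_lt_of_le (hJeq ▸ hs) hscard
      have hTne : T.Nonempty :=
        Finset.Nonempty.image (Finset.card_pos.1 (lt_of_le_of_lt (Nat.zero_le _) hs)) _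
      have hTsum_le : ∑ i ∈ T, m i ≤ N :=
        hw ▸ Finset.sum_le_sum_of_subset (Finset.subset_univ T)
      have hJc : Jᶜ.Nonempty := by
        rw [← Finset.card_pos, Finset.card_compl]
        have hJN : J.card < N := lt_of_lt_of_le hJcard hTsum_le
        simp only [Fintype.card_fin]
        omega
      obtain ⟨p, hp, hpmin⟩ :=
        Finset.exists_min_image (T ×ˢ Jᶜ) (fun q => B q.1 q.2) (hTne.product hJc)
      obtain ⟨hpT, hpJc⟩ := Finset.mem_product.1 hp
      set ε := B p.1 p.2 with hεdef
      have hεpos : 0 < ε := by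
        rcases lt_or_eq_of_le (hBnn p.1 p.2) with h | h
        · exact h
        · exact absurd (Finset.mem_biUnion.2
            ⟨p.1, hpT, Finset.mem_filter.2 ⟨Finset.mem_univ p.2, h.symm⟩⟩)
            (Finset.mem_compl.1 hpJc)
      set sh : ℝ := if i0 ∈ T then ε else 0 with hshdef
      set x' : (Fin M → ℝ) × (Fin N → ℝ) :=
        (fun i => x.1 i - (if i ∈ T then ε else 0) + sh,
         fun j => x.2 j + (if j ∈ J then ε else 0) - sh) with hx'def
      have hx'feas : ∀ i j, 0 ≤ A i j + x'.1 i + x'.2 j := by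
        intro i j
        have h1 : A i j + x'.1 i + x'.2 j =
            B i j - (if i ∈ T then ε else 0) + (if j ∈ J then ε else 0) := by
          simp only [hx'def, hBdef]; ring
        rw [h1]
        by_cases hiT : i ∈ T
        · by_cases hjJ : j ∈ J
          · simp only [hiT, hjJ, if_pos]; linarith [hBnn i j]
          · have := hpmin (i, j) (Finset.mem_product.2 ⟨hiT, Finset.mem_compl.2 hjJ⟩)
            simp only [hiT, if_pos, hjJ, if_neg, not_false_iff]
            simp only at this
            linarith
        · by_cases hjJ : j ∈ J
          · simp only [hiT, if_neg, not_false_iff, hjJ, if_pos]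
            linarith [hBnn i j, hεpos.le]
          · simp only [hiT, hjJ, if_neg, not_false_iff]
            linarith [hBnn i j]
      have hφx' : φ x' = φ x - (∑ i ∈ T, (m i : ℝ)) * ε + J.card * ε := by
        have e1 : ∑ i, (m i : ℝ) * x'.1 i =
            (∑ i, (m i : ℝ) * x.1 i) - (∑ i ∈ T, (m i : ℝ)) * ε + N * sh := by
          have hterm : ∀ i : Fin M, (m i : ℝ) * x'.1 i =
              (m i : ℝ) * x.1 i - (if i ∈ T then (m i : ℝ) * ε else 0) + (m i : ℝ) * sh := by
            intro i; by_cases h : i ∈ T <;> simp [hx'def, h] <;> ring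
          rw [Finset.sum_congr rfl fun i _ => hterm i]
          rw [Finset.sum_add_distrib, Finset.sum_sub_distrib, Finset.sum_ite_mem,
            Finset.univ_inter, ← Finset.sum_mul, ← Finset.sum_mul, hNcast]
        have e2 : ∑ j, x'.2 j = (∑ j, x.2 j) + J.card * ε - N * sh := by
          have hterm : ∀ j : Fin N, x'.2 j =
              x.2 j + (if j ∈ J then ε else 0) - sh := fun j => rfl
          rw [Finset.sum_congr rfl fun j _ => hterm j]
          rw [Finset.sum_sub_distrib, Finset.sum_add_distrib, Finset.sum_ite_mem,
            Finset.univ_inter, Finset.sum_const, Finset.sum_const, Finset.card_univ,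
            Fintype.card_fin]
          simp [nsmul_eq_mul]
        simp only [hφdef]
        rw [e1, e2]
        ring
      have hφlt : φ x' < φ x := by
        have hTJ : (J.card : ℝ) < ∑ i ∈ T, (m i : ℝ) := by
          have : ((J.card : ℕ) : ℝ) < ((∑ i ∈ T, m i : ℕ) : ℝ) := by exact_mod_cast hJcard
          push_cast at this ⊢
          exact this
        rw [hφx']
        nlinarith [mul_pos hεpos (sub_pos.2 hTJ)]
      have hx'K : x' ∈ K := by
        refine ⟨hx'feas, le_trans hφlt.le hφle, ?_⟩
        simp only [hx'def, hr0, hshdef]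
        ring
      exact absurd (isMinOn_iff.1 hxmin x' hx'K) (not_le.2 hφlt)
    obtain ⟨f, hfinj, hft⟩ := (Finset.all_card_le_biUnion_card_iff_exists_injective t).1 hall
    obtain ⟨P, hP, hPf⟩ := partition_of_injective m hw f hfinj
    refine ⟨x.1, x.2, hBnn, twPerm_eq_zero_of m B hBnn P hP ?_⟩
    intro i j hj
    obtain ⟨k, hk⟩ := hPf i j hj
    have h := hft ⟨i, k⟩
    simp only [htdef, Finset.mem_filter, Finset.mem_univ, true_and] at h
    rw [← hk]
    exact h
end

section
/- Fix positive integer weights (m_1, …, m_M) with m_1 + ⋯ + m_M = N − 1. The weighted transportation polytope T equals the Minkowski sum Σ_{j=1}^{N} φ_j(D). -/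
open Pointwise

/-- The polytope of weighted doubly stochastic tw-matrices (M × K matrices, K = N - 1). -/
def stochPolytope {M K : ℕ} (m : Fin M → ℕ) : Set (Fin M → Fin K → ℝ) :=
  {Y | (∀ i j, 0 ≤ Y i j) ∧ (∀ i, ∑ j, Y i j = 1) ∧ ∀ j, ∑ i, (m i : ℝ) * Y i j = 1}

/-- The weighted transportation polytope (M × N matrices, N = K + 1): row sums `N` and
weighted column sums `N - 1`. -/
def transPolytope {M K : ℕ} (m : Fin M → ℕ) : Set (Fin M → Fin (K + 1) → ℝ) :=
  {Y | (∀ i j, 0 ≤ Y i j) ∧ (∀ i, ∑ j, Y i j = ((K : ℝ) + 1)) ∧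
    ∀ j, ∑ i, (m i : ℝ) * Y i j = (K : ℝ)}

/-- The embedding `φ_j` of `M × K` matrices into `M × (K+1)` matrices given by inserting a
zero column in position `j`. -/
def insertZeroCol {M K : ℕ} (j : Fin (K + 1)) (Y : Fin M → Fin K → ℝ) :
    Fin M → Fin (K + 1) → ℝ :=
  fun i => Fin.insertNth j (0 : ℝ) (Y i)

@[simp] lemma insertZeroCol_apply_same {M K : ℕ} (j : Fin (K + 1)) (Y : Fin M → Fin K → ℝ)
    (i : Fin M) : insertZeroCol j Y i j = 0 :=
  Fin.insertNth_apply_same (α := fun _ => ℝ) j 0 (Y i)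

@[simp] lemma insertZeroCol_apply_succAbove {M K : ℕ} (j : Fin (K + 1)) (Y : Fin M → Fin K → ℝ)
    (i : Fin M) (c : Fin K) : insertZeroCol j Y i (j.succAbove c) = Y i c :=
  Fin.insertNth_apply_succAbove (α := fun _ => ℝ) j 0 (Y i) c

/-- Summing over a sigma type of fibers. -/
lemma sigma_sum_eq {M : ℕ} {m : Fin M → ℕ} (g : ((i : Fin M) × Fin (m i)) → ℝ) :
    ∑ p : (i : Fin M) × Fin (m i), g p = ∑ i, ∑ s : Fin (m i), g ⟨i, s⟩ := by
  rw [← Finset.univ_sigma_univ, Finset.sum_sigma]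

/-- Summing an indicator over the complement of `j`. -/
lemma sum_ind_succAbove {K : ℕ} (j x : Fin (K + 1)) (h : x ≠ j) :
    ∑ c : Fin K, (if x = j.succAbove c then (1 : ℝ) else 0) = 1 := by
  have h1 : ∑ c' : Fin (K + 1), (if x = c' then (1 : ℝ) else 0) = 1 := by simp
  rw [Fin.sum_univ_succAbove (fun c' => if x = c' then (1 : ℝ) else 0) j] at h1
  simpa [h] using h1

/-- Summing an indicator over `Fin K` embedded by `castSucc`, for a permutation avoiding `x`
on the last element. -/
lemma sum_ind_castSucc {K : ℕ} (σ : Equiv.Perm (Fin (K + 1))) (x : Fin (K + 1))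
    (h : σ (Fin.last K) ≠ x) :
    ∑ r : Fin K, (if σ (Fin.castSucc r) = x then (1 : ℝ) else 0) = 1 := by
  have h1 : ∑ r' : Fin (K + 1), (if σ r' = x then (1 : ℝ) else 0) = 1 := by
    rw [Equiv.sum_comp σ (fun y => if y = x then (1 : ℝ) else 0)]
    simp
  rw [Fin.sum_univ_castSucc (fun r' : Fin (K + 1) => if σ r' = x then (1 : ℝ) else 0)] at h1
  simpa [h] using h1

/-- The weighted transportation polytope is the Minkowski sum `Σ_{j=1}^{N} φ_j(D)`. -/
theorem transPolytope_eq_minkowski_sum {M K : ℕ} (m : Fin M → ℕ)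
    (hm : ∀ i, 1 ≤ m i) (hw : ∑ i, m i = K) :
    transPolytope (M := M) (K := K) m =
      ∑ j : Fin (K + 1), (insertZeroCol j '' stochPolytope m) := by
  have hK1 : ((K : ℝ) + 1) ≠ 0 := by positivity
  have hmR : ∀ i, (m i : ℝ) ≠ 0 := fun i => by
    have := hm i; positivity
  apply Set.Subset.antisymm
  · -- hard direction
    intro Y hY
    obtain ⟨hY0, hYrow, hYcol⟩ := hY
    -- the expansion equivalence
    have hcard : Fintype.card ((i : Fin M) × Fin (m i)) = Fintype.card (Fin K) := by
      simp [Fintype.card_sigma, hw]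
    let e : ((i : Fin M) × Fin (m i)) ≃ Fin K := Fintype.equivOfCardEq hcard
    let β : Fin K → Fin M := fun r => (e.symm r).1
    have hβe : ∀ (i : Fin M) (s : Fin (m i)), β (e ⟨i, s⟩) = i := by
      intro i s
      simp only [β, Equiv.symm_apply_apply]
    -- fiber summation lemma
    have hfiber : ∀ f : Fin M → ℝ, ∑ r : Fin K, f (β r) = ∑ i, (m i : ℝ) * f i := by
      intro f
      rw [← Equiv.sum_comp e (fun r => f (β r)), sigma_sum_eq fun p => f (β (e p))]
      apply Finset.sum_congr rfl
      intro i _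
      rw [Finset.sum_congr rfl fun s _ => by rw [hβe i s]]
      simp [mul_comm]
    -- the big doubly stochastic matrix
    let Z : Matrix (Fin (K + 1)) (Fin (K + 1)) ℝ :=
      Matrix.of (Fin.lastCases (fun _ => ((K : ℝ) + 1)⁻¹)
        (fun r c => Y (β r) c * ((K : ℝ) + 1)⁻¹))
    have hZlast : ∀ c, Z (Fin.last K) c = ((K : ℝ) + 1)⁻¹ := fun c => by
      simp [Z, Matrix.of_apply]
    have hZcast : ∀ r c, Z (Fin.castSucc r) c = Y (β r) c * ((K : ℝ) + 1)⁻¹ := fun r c => by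
      simp [Z, Matrix.of_apply]
    have hZ : Z ∈ doublyStochastic ℝ (Fin (K + 1)) := by
      rw [mem_doublyStochastic_iff_sum]
      refine ⟨fun r c => ?_, fun r => ?_, fun c => ?_⟩
      · induction r using Fin.lastCases with
        | last => rw [hZlast]; positivity
        | cast r => rw [hZcast]; have := hY0 (β r) c; positivity
      · induction r using Fin.lastCases with
        | last =>
          simp only [hZlast, Finset.sum_const, Finset.card_univ, Fintype.card_fin, nsmul_eq_mul]
          push_cast
          field_simp
        | cast r =>
          simp only [hZcast, ← Finset.sum_mul, hYrow (β r)]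
          field_simp
      · rw [Fin.sum_univ_castSucc (fun r : Fin (K + 1) => Z r c)]
        simp only [hZcast, hZlast, ← Finset.sum_mul]
        rw [hfiber (fun i => Y i c), hYcol c]
        field_simp
    obtain ⟨w, hw0, hw1, hwZ⟩ := exists_eq_sum_perm_of_mem_doublyStochastic hZ
    -- entries of Z as weighted indicator sums
    have hZentry : ∀ r c, Z r c =
        ∑ σ : Equiv.Perm (Fin (K + 1)), (if σ r = c then w σ else 0) := by
      intro r c
      rw [← hwZ]
      simp [Matrix.sum_apply, Matrix.smul_apply, PEquiv.toMatrix_apply, Equiv.toPEquiv_apply,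
        smul_eq_mul, mul_ite, mul_one, mul_zero]
    -- the group weights
    have hmu : ∀ j : Fin (K + 1),
        ∑ σ : Equiv.Perm (Fin (K + 1)), (if σ (Fin.last K) = j then w σ else 0)
          = ((K : ℝ) + 1)⁻¹ := by
      intro j
      rw [← hZentry (Fin.last K) j]
      exact hZlast j
    have hcastne : ∀ (σ : Equiv.Perm (Fin (K + 1))) (r : Fin K),
        σ (Fin.castSucc r) ≠ σ (Fin.last K) := fun σ r h =>
      (Fin.castSucc_lt_last r).ne (σ.injective h)
    -- the decomposition pieces
    set A : Fin (K + 1) → Fin M → Fin K → ℝ := fun j i c =>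
      ((K : ℝ) + 1) / (m i) * ∑ σ : Equiv.Perm (Fin (K + 1)),
        (if σ (Fin.last K) = j then w σ else 0) *
          ∑ s : Fin (m i), (if σ (Fin.castSucc (e ⟨i, s⟩)) = j.succAbove c then (1 : ℝ) else 0)
      with hAdef
    -- each piece is in the stochastic polytope
    have hA : ∀ j, A j ∈ stochPolytope m := by
      intro j
      refine ⟨fun i c => ?_, fun i => ?_, fun c => ?_⟩
      · apply mul_nonneg (by positivity)
        apply Finset.sum_nonneg
        intro σ _
        apply mul_nonneg (by split <;> [exact hw0 σ; rfl])
        apply Finset.sum_nonneg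
        intro s _
        split <;> norm_num
      · -- row sums
        simp only [hAdef]
        rw [← Finset.mul_sum, Finset.sum_comm]
        have key : ∀ σ : Equiv.Perm (Fin (K + 1)),
            ∑ c : Fin K, ((if σ (Fin.last K) = j then w σ else 0) *
              ∑ s : Fin (m i), (if σ (Fin.castSucc (e ⟨i, s⟩)) = j.succAbove c
                then (1 : ℝ) else 0))
            = (if σ (Fin.last K) = j then w σ else 0) * (m i) := by
          intro σ
          rw [← Finset.mul_sum]
          by_cases h : σ (Fin.last K) = j
          · congr 1
            rw [Finset.sum_comm]
            rw [Finset.sum_congr rfl fun s _ =>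
              sum_ind_succAbove j _ (h ▸ hcastne σ (e ⟨i, s⟩))]
            simp
          · simp [h]
        rw [Finset.sum_congr rfl fun σ _ => key σ, ← Finset.sum_mul, hmu j]
        field_simp
        rw [div_eq_iff (hmR i)]
        ring
      · -- weighted column sums
        simp only [hAdef]
        have key : ∀ i : Fin M, (m i : ℝ) *
            (((K : ℝ) + 1) / (m i) * ∑ σ : Equiv.Perm (Fin (K + 1)),
              (if σ (Fin.last K) = j then w σ else 0) *
                ∑ s : Fin (m i), (if σ (Fin.castSucc (e ⟨i, s⟩)) = j.succAbove c
                  then (1 : ℝ) else 0))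
            = ((K : ℝ) + 1) * ∑ σ : Equiv.Perm (Fin (K + 1)),
              (if σ (Fin.last K) = j then w σ else 0) *
                ∑ s : Fin (m i), (if σ (Fin.castSucc (e ⟨i, s⟩)) = j.succAbove c
                  then (1 : ℝ) else 0) := by
          intro i
          rw [← mul_assoc, ← mul_div_assoc, mul_comm (m i : ℝ) ((K : ℝ) + 1),
            mul_div_assoc, div_self (hmR i), mul_one]
        rw [Finset.sum_congr rfl fun i _ => key i, ← Finset.mul_sum, Finset.sum_comm]
        have key2 : ∀ σ : Equiv.Perm (Fin (K + 1)),
            ∑ i, ((if σ (Fin.last K) = j then w σ else 0) *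
              ∑ s : Fin (m i), (if σ (Fin.castSucc (e ⟨i, s⟩)) = j.succAbove c
                then (1 : ℝ) else 0))
            = (if σ (Fin.last K) = j then w σ else 0) := by
          intro σ
          rw [← Finset.mul_sum]
          by_cases h : σ (Fin.last K) = j
          · rw [← sigma_sum_eq
              (fun p => if σ (Fin.castSucc (e p)) = j.succAbove c then (1 : ℝ) else 0)]
            rw [Equiv.sum_comp e
              (fun r => if σ (Fin.castSucc r) = j.succAbove c then (1 : ℝ) else 0)]
            rw [sum_ind_castSucc σ _ (by rw [h]; exact (Fin.succAbove_ne j c).symm)]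
            rw [mul_one]
          · simp [h]
        rw [Finset.sum_congr rfl fun σ _ => key2 σ, hmu j, mul_inv_cancel₀ hK1]
    -- the pieces sum to Y
    have hsum : ∀ i c', ∑ j, insertZeroCol j (A j) i c' = Y i c' := by
      intro i c'
      have step1 : ∀ j, insertZeroCol j (A j) i c' =
          ((K : ℝ) + 1) / (m i) * ∑ σ : Equiv.Perm (Fin (K + 1)),
            (if σ (Fin.last K) = j then w σ else 0) *
              ∑ s : Fin (m i), (if σ (Fin.castSucc (e ⟨i, s⟩)) = c' then (1 : ℝ) else 0) := by
        intro j
        rcases eq_or_ne c' j with rfl | h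
        · rw [insertZeroCol_apply_same]
          symm
          have hz : ∀ σ : Equiv.Perm (Fin (K + 1)),
              (if σ (Fin.last K) = c' then w σ else 0) *
                ∑ s : Fin (m i), (if σ (Fin.castSucc (e ⟨i, s⟩)) = c' then (1 : ℝ) else 0)
                = 0 := by
            intro σ
            by_cases h2 : σ (Fin.last K) = c'
            · rw [Finset.sum_eq_zero fun s _ => if_neg (h2 ▸ hcastne σ (e ⟨i, s⟩)), mul_zero]
            · rw [if_neg h2, zero_mul]
          rw [Finset.sum_eq_zero fun σ _ => hz σ, mul_zero]
        · obtain ⟨c, rfl⟩ := Fin.exists_succAbove_eq h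
          rw [insertZeroCol_apply_succAbove]
      rw [Finset.sum_congr rfl fun j _ => step1 j, ← Finset.mul_sum, Finset.sum_comm]
      have key3 : ∀ σ : Equiv.Perm (Fin (K + 1)),
          ∑ j, ((if σ (Fin.last K) = j then w σ else 0) *
            ∑ s : Fin (m i), (if σ (Fin.castSucc (e ⟨i, s⟩)) = c' then (1 : ℝ) else 0))
          = w σ * ∑ s : Fin (m i),
              (if σ (Fin.castSucc (e ⟨i, s⟩)) = c' then (1 : ℝ) else 0) := by
        intro σ
        rw [Finset.sum_congr rfl (fun j _ => by rw [ite_mul, zero_mul]),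
          Finset.sum_ite_eq (Finset.univ : Finset (Fin (K + 1))) (σ (Fin.last K))
            (fun j => w σ * ∑ s : Fin (m i),
              (if σ (Fin.castSucc (e ⟨i, s⟩)) = c' then (1 : ℝ) else 0))]
        simp
      rw [Finset.sum_congr rfl fun σ _ => key3 σ]
      have h7 : ∀ s : Fin (m i), ∑ σ : Equiv.Perm (Fin (K + 1)),
          w σ * (if σ (Fin.castSucc (e ⟨i, s⟩)) = c' then (1 : ℝ) else 0)
          = Y i c' * ((K : ℝ) + 1)⁻¹ := by
        intro s
        have h8 : ∀ σ : Equiv.Perm (Fin (K + 1)),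
            w σ * (if σ (Fin.castSucc (e ⟨i, s⟩)) = c' then (1 : ℝ) else 0)
            = (if σ (Fin.castSucc (e ⟨i, s⟩)) = c' then w σ else 0) := fun σ => by
          split <;> simp
        rw [Finset.sum_congr rfl fun σ _ => h8 σ, ← hZentry, hZcast, hβe i s]
      rw [Finset.sum_congr rfl fun σ _ => Finset.mul_sum _ _ _, Finset.sum_comm,
        Finset.sum_congr rfl fun s _ => h7 s, Finset.sum_const, Finset.card_univ,
        Fintype.card_fin, nsmul_eq_mul]
      field_simp
      rw [div_eq_iff (hmR i)]
      ring
    rw [Set.mem_fintype_sum]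
    refine ⟨fun j => insertZeroCol j (A j), fun j => ⟨A j, hA j, rfl⟩, ?_⟩
    funext i c'
    rw [Finset.sum_apply, Finset.sum_apply]
    exact hsum i c'
  · -- easy direction
    intro X hX
    rw [Set.mem_fintype_sum] at hX
    obtain ⟨g, hg, hgX⟩ := hX
    choose ZZ hZZ hgZ using fun j => hg j
    subst hgX
    have hentry : ∀ j, g j = insertZeroCol j (ZZ j) := fun j => (hgZ j).symm
    refine ⟨fun i c => ?_, fun i => ?_, fun c => ?_⟩
    · simp only [Finset.sum_apply]
      apply Finset.sum_nonneg
      intro j _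
      rw [hentry j]
      rcases eq_or_ne c j with rfl | h
      · rw [insertZeroCol_apply_same]
      · obtain ⟨c₀, rfl⟩ := Fin.exists_succAbove_eq h
        rw [insertZeroCol_apply_succAbove]
        exact (hZZ j).1 i c₀
    · simp only [Finset.sum_apply]
      rw [Finset.sum_comm]
      have h3 : ∀ j, ∑ c, g j i c = 1 := by
        intro j
        rw [hentry j]
        rw [Fin.sum_univ_succAbove (fun c => insertZeroCol j (ZZ j) i c) j]
        simp only [insertZeroCol_apply_same, insertZeroCol_apply_succAbove, zero_add]
        exact (hZZ j).2.1 i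
      rw [Finset.sum_congr rfl fun j _ => h3 j]
      simp
    · simp only [Finset.sum_apply, Finset.mul_sum]
      rw [Finset.sum_comm]
      have h3 : ∀ j, ∑ i, (m i : ℝ) * g j i c = if j = c then 0 else 1 := by
        intro j
        rw [hentry j]
        rcases eq_or_ne c j with rfl | h
        · simp
        · obtain ⟨c₀, rfl⟩ := Fin.exists_succAbove_eq h
          rw [if_neg (Fin.succAbove_ne j c₀).symm]
          rw [Finset.sum_congr rfl fun i _ => by rw [insertZeroCol_apply_succAbove]]
          exact (hZZ j).2.2 c₀
      rw [Finset.sum_congr rfl fun j _ => h3 j]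
      have h4 : ∀ j : Fin (K + 1), (if j = c then (0 : ℝ) else 1)
          = 1 - (if j = c then 1 else 0) := fun j => by split <;> ring
      rw [Finset.sum_congr rfl fun j _ => h4 j, Finset.sum_sub_distrib,
        Finset.sum_ite_eq' (Finset.univ : Finset (Fin (K + 1))) c (fun _ => (1 : ℝ))]
      simp
end

section
/- Fix positive integer weights (m_1, …, m_M) with m_1 + ⋯ + m_M = N − 1. Taking the support hypergraph gives a bijection between the vertices (extreme points) of the weighted transportation polytope T and the connected linkage hypergraphs on vertex set {1, …, N} with edges indexed by {1, …, M} where edge i has exactly m_i + 1 vertices. Moreover, every vertex of T lies in the Minkowski sum Σ_{j=1}^{N} φ_j(D). -/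
open Pointwise

/-- The support hypergraph of a nonnegative matrix: edge `i` is the set of columns where
row `i` is positive. -/
def suppHyp {M N : ℕ} (Y : Fin M → Fin N → ℝ) : Fin M → Set (Fin N) :=
  fun i => {j | 0 < Y i j}

/-- A hypergraph (with edges given by vertex sets) is connected. -/
def SConnected {V E : Type*} (H : E → Set V) : Prop :=
  ∀ u v : V, Relation.ReflTransGen (fun p q => ∃ e, p ∈ H e ∧ q ∈ H e) u v


namespace TPVert

open Finset
open scoped Classical

variable {M N : ℕ}

def Rel (G : Fin M → Finset (Fin N)) (E : Finset (Fin M)) (p q : Fin N) : Prop :=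
  ∃ e ∈ E, p ∈ G e ∧ q ∈ G e

abbrev Reach (G : Fin M → Finset (Fin N)) (E : Finset (Fin M)) (p q : Fin N) : Prop :=
  Relation.ReflTransGen (Rel G E) p q

noncomputable def cls (G : Fin M → Finset (Fin N)) (E : Finset (Fin M)) (v : Fin N) :
    Finset (Fin N) :=
  Finset.univ.filter (fun q => Reach G E v q)

variable {G : Fin M → Finset (Fin N)}

lemma rel_symm {E : Finset (Fin M)} : Symmetric (Rel G E) := by
  rintro p q ⟨e, he, hp, hq⟩; exact ⟨e, he, hq, hp⟩

lemma reach_symm {E : Finset (Fin M)} {p q : Fin N} (h : Reach G E p q) : Reach G E q p :=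
  (@Relation.ReflTransGen.stdSymm _ (Rel G E) ⟨fun a b hab => rel_symm hab⟩).symm _ _ h

lemma reach_mono {E E' : Finset (Fin M)} (hEE : E ⊆ E') {p q : Fin N}
    (h : Reach G E p q) : Reach G E' p q := by
  refine Relation.ReflTransGen.mono ?_ p q h
  rintro a b ⟨e, he, ha, hb⟩; exact ⟨e, hEE he, ha, hb⟩

lemma mem_cls {E : Finset (Fin M)} {v q : Fin N} : q ∈ cls G E v ↔ Reach G E v q := by
  simp [cls]

lemma self_mem_cls {E : Finset (Fin M)} {v : Fin N} : v ∈ cls G E v :=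
  mem_cls.2 Relation.ReflTransGen.refl

lemma cls_eq_of_mem {E : Finset (Fin M)} {v q : Fin N} (h : q ∈ cls G E v) :
    cls G E q = cls G E v := by
  ext x
  simp only [mem_cls] at h ⊢
  constructor
  · exact fun hx => h.trans hx
  · exact fun hx => (reach_symm h).trans hx

lemma reach_stays {E : Finset (Fin M)} {S : Finset (Fin N)} (hE : ∀ e ∈ E, G e ⊆ S)
    {p q : Fin N} (hp : p ∈ S) (h : Reach G E p q) : q ∈ S := by
  induction h with
  | refl => exact hp
  | tail _ hrel ih => obtain ⟨e, he, _, hq⟩ := hrel; exact hE e he hq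

lemma edge_subset_cls {E : Finset (Fin M)} {e : Fin M} (he : e ∈ E) {v x : Fin N}
    (hx : x ∈ G e) (hxc : x ∈ cls G E v) : G e ⊆ cls G E v := by
  intro w hw
  exact mem_cls.2 ((mem_cls.1 hxc).tail ⟨e, he, hx, hw⟩)

lemma reach_avoid {E : Finset (Fin M)} {e : Fin M} {p q : Fin N} (h : Reach G E p q) :
    Reach G (E.erase e) p q ∨ ∃ v ∈ G e, Reach G (E.erase e) v q := by
  induction h with
  | refl => exact Or.inl Relation.ReflTransGen.refl
  | tail _ hrel ih =>
    obtain ⟨e', he', hx, hq⟩ := hrel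
    by_cases hee : e' = e
    · subst hee
      exact Or.inr ⟨_, hq, Relation.ReflTransGen.refl⟩
    · have he'' : e' ∈ E.erase e := Finset.mem_erase.2 ⟨hee, he'⟩
      rcases ih with h1 | ⟨v, hv, h2⟩
      · exact Or.inl (h1.tail ⟨e', he'', hx, hq⟩)
      · exact Or.inr ⟨v, hv, h2.tail ⟨e', he'', hx, hq⟩⟩

lemma reach_restrict {E : Finset (Fin M)} {v q : Fin N} (h : Reach G E v q) :
    Reach G (E.filter (fun e => G e ⊆ cls G E v)) v q := by
  induction h with
  | refl => exact Relation.ReflTransGen.refl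
  | @tail p q hvp hrel ih =>
    obtain ⟨e, he, hp, hq⟩ := hrel
    have hsub : G e ⊆ cls G E v := edge_subset_cls he hp (mem_cls.2 hvp)
    exact ih.tail ⟨e, Finset.mem_filter.2 ⟨he, hsub⟩, hp, hq⟩



variable {m : Fin M → ℕ}

lemma card_le_sum (hsz : ∀ e, (G e).card = m e + 1) :
    ∀ (n : ℕ) (E : Finset (Fin M)) (S : Finset (Fin N)) (v₀ : Fin N), E.card = n →
      (∀ e ∈ E, G e ⊆ S) → v₀ ∈ S → (∀ q ∈ S, Reach G E v₀ q) →
      S.card ≤ (∑ e ∈ E, m e) + 1 := by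
  intro n
  induction n using Nat.strong_induction_on with
  | _ n IH =>
    intro E S v₀ hcard hES hv₀ hconn
    by_cases hS : S ⊆ {v₀}
    · calc S.card ≤ ({v₀} : Finset (Fin N)).card := Finset.card_le_card hS
        _ = 1 := Finset.card_singleton v₀
        _ ≤ _ := le_add_self
    · -- there is q ∈ S, q ≠ v₀; get an edge containing v₀
      obtain ⟨q, hqS, hqv⟩ : ∃ q ∈ S, q ≠ v₀ := by
        by_contra h
        push_neg at h
        exact hS fun x hx => Finset.mem_singleton.2 (h x hx)
      obtain ⟨e, he, hv₀e⟩ : ∃ e ∈ E, v₀ ∈ G e := by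
        rcases (hconn q hqS).cases_head with h | ⟨c, ⟨e, he, hv, _⟩, _⟩
        · exact absurd h.symm hqv
        · exact ⟨e, he, hv⟩
      set E' := E.erase e with hE'
      set F := (G e).image (cls G E') with hF
      have hcover : ∀ x ∈ S, ∃ C ∈ F, x ∈ C := by
        intro x hx
        rcases reach_avoid (e := e) (hconn x hx) with h | ⟨v, hv, h⟩
        · exact ⟨cls G E' v₀, Finset.mem_image_of_mem _ hv₀e, mem_cls.2 h⟩
        · exact ⟨cls G E' v, Finset.mem_image_of_mem _ hv, mem_cls.2 h⟩
      have hSsub : S ⊆ F.biUnion id := by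
        intro x hx
        obtain ⟨C, hC, hxC⟩ := hcover x hx
        exact Finset.mem_biUnion.2 ⟨C, hC, hxC⟩
      have hcls_eq : ∀ C ∈ F, ∀ x ∈ C, cls G E' x = C := by
        intro C hC x hx
        obtain ⟨v, _, rfl⟩ := Finset.mem_image.1 hC
        exact cls_eq_of_mem hx
      have hCbound : ∀ C ∈ F, C.card ≤ (∑ e' ∈ E'.filter (fun e' => G e' ⊆ C), m e') + 1 := by
        intro C hC
        obtain ⟨v, hvGe, rfl⟩ := Finset.mem_image.1 hC
        refine IH (E'.filter (fun e' => G e' ⊆ cls G E' v)).card ?_ _ _ v rfl ?_ self_mem_cls ?_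
        · calc (E'.filter _).card ≤ E'.card := Finset.card_le_card (Finset.filter_subset _ _)
            _ < E.card := Finset.card_erase_lt_of_mem he
            _ = n := hcard
        · intro e' he'
          exact (Finset.mem_filter.1 he').2
        · intro x hx
          have := reach_restrict (mem_cls.1 hx)
          exact this
      have hdisj : (↑F : Set (Finset (Fin N))).PairwiseDisjoint
          (fun C => E'.filter (fun e' => G e' ⊆ C)) := by
        intro C hC C' hC' hne
        simp only [Finset.disjoint_left]
        intro e' h1 h2
        have h1' := Finset.mem_filter.1 h1
        have h2' := Finset.mem_filter.1 h2
        have hGe' : (G e').Nonempty := by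
          rw [← Finset.card_pos, hsz e']; omega
        obtain ⟨x, hx⟩ := hGe'
        exact hne (by rw [← hcls_eq C hC x (h1'.2 hx), hcls_eq C' hC' x (h2'.2 hx)])
      have step1 : S.card ≤ ∑ C ∈ F, C.card :=
        le_trans (Finset.card_le_card hSsub) Finset.card_biUnion_le
      have step2 : ∑ C ∈ F, C.card ≤ (∑ C ∈ F, ∑ e' ∈ E'.filter (fun e' => G e' ⊆ C), m e') + F.card := by
        calc ∑ C ∈ F, C.card ≤ ∑ C ∈ F, ((∑ e' ∈ E'.filter (fun e' => G e' ⊆ C), m e') + 1) :=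
              Finset.sum_le_sum hCbound
          _ = _ := by rw [Finset.sum_add_distrib, Finset.sum_const, smul_eq_mul, mul_one]
      have step3 : ∑ C ∈ F, ∑ e' ∈ E'.filter (fun e' => G e' ⊆ C), m e' ≤ ∑ e' ∈ E', m e' := by
        rw [← Finset.sum_biUnion hdisj]
        exact Finset.sum_le_sum_of_subset (fun e' he' => by
          obtain ⟨C, _, h⟩ := Finset.mem_biUnion.1 he'
          exact (Finset.mem_filter.1 h).1)
      have step4 : F.card ≤ m e + 1 := by
        calc F.card ≤ (G e).card := Finset.card_image_le
          _ = m e + 1 := hsz e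
      have hsum : (∑ e' ∈ E', m e') + m e = ∑ e' ∈ E, m e' := by
        rw [add_comm]; exact Finset.add_sum_erase E m he
      omega



def HT (G : Fin M → Finset (Fin N)) (m : Fin M → ℕ) (E : Finset (Fin M))
    (S : Finset (Fin N)) : Prop :=
  (∀ e ∈ E, G e ⊆ S) ∧ (∀ p ∈ S, ∀ q ∈ S, Reach G E p q) ∧ S.card = (∑ e ∈ E, m e) + 1

lemma HT_decomp (hsz : ∀ e, (G e).card = m e + 1) {E : Finset (Fin M)} {S : Finset (Fin N)}
    (h : HT G m E S) {e : Fin M} (he : e ∈ E) :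
    (∀ q ∈ S, ∃ v ∈ G e, q ∈ cls G (E.erase e) v) ∧
    (∀ v ∈ G e, ∀ v' ∈ G e, v' ∈ cls G (E.erase e) v → v' = v) ∧
    (∀ v ∈ G e, HT G m ((E.erase e).filter (fun e' => G e' ⊆ cls G (E.erase e) v))
      (cls G (E.erase e) v)) := by
  obtain ⟨hES, hconn, hcard⟩ := h
  set E' := E.erase e with hE'def
  have hE'S : ∀ e' ∈ E', G e' ⊆ S := fun e' he' => hES e' (Finset.mem_erase.1 he').2
  have hGeS : G e ⊆ S := hES e he
  have hGene : (G e).Nonempty := by rw [← Finset.card_pos, hsz e]; omega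
  obtain ⟨v₀, hv₀⟩ := hGene
  -- cover
  have hcover : ∀ q ∈ S, ∃ v ∈ G e, q ∈ cls G E' v := by
    intro q hq
    rcases reach_avoid (e := e) (hconn v₀ (hGeS hv₀) q hq) with h | ⟨v, hv, h⟩
    · exact ⟨v₀, hv₀, mem_cls.2 h⟩
    · exact ⟨v, hv, mem_cls.2 h⟩
  set F := (G e).image (cls G E') with hFdef
  have hclsS : ∀ C ∈ F, C ⊆ S := by
    intro C hC x hx
    obtain ⟨v, hv, rfl⟩ := Finset.mem_image.1 hC
    exact reach_stays hE'S (hGeS hv) (mem_cls.1 hx)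
  have hcls_eq : ∀ C ∈ F, ∀ x ∈ C, cls G E' x = C := by
    intro C hC x hx
    obtain ⟨v, _, rfl⟩ := Finset.mem_image.1 hC
    exact cls_eq_of_mem hx
  have hdisjC : (↑F : Set (Finset (Fin N))).PairwiseDisjoint id := by
    intro C hC C' hC' hne
    simp only [Finset.disjoint_left, id]
    intro x h1 h2
    exact hne (by rw [← hcls_eq C hC x h1, hcls_eq C' hC' x h2])
  have hSeq : S = F.biUnion id := by
    apply Finset.Subset.antisymm
    · intro x hx
      obtain ⟨v, hv, hxv⟩ := hcover x hx
      exact Finset.mem_biUnion.2 ⟨cls G E' v, Finset.mem_image_of_mem _ hv, hxv⟩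
    · intro x hx
      obtain ⟨C, hC, hxC⟩ := Finset.mem_biUnion.1 hx
      exact hclsS C hC hxC
  have hcards : ∑ C ∈ F, C.card = S.card := by
    rw [hSeq, Finset.card_biUnion (by exact fun C hC C' hC' hne => hdisjC hC hC' hne)]
    rfl
  have hbnd : ∀ C ∈ F, C.card ≤ (∑ e' ∈ E'.filter (fun e' => G e' ⊆ C), m e') + 1 := by
    intro C hC
    obtain ⟨v, hvGe, rfl⟩ := Finset.mem_image.1 hC
    exact card_le_sum hsz _ _ _ v rfl (fun e' he' => (Finset.mem_filter.1 he').2)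
      self_mem_cls (fun x hx => reach_restrict (mem_cls.1 hx))
  have hdisjE : (↑F : Set (Finset (Fin N))).PairwiseDisjoint
      (fun C => E'.filter (fun e' => G e' ⊆ C)) := by
    intro C hC C' hC' hne
    simp only [Finset.disjoint_left]
    intro e' h1 h2
    have hGe' : (G e').Nonempty := by rw [← Finset.card_pos, hsz e']; omega
    obtain ⟨x, hx⟩ := hGe'
    exact hne (by rw [← hcls_eq C hC x ((Finset.mem_filter.1 h1).2 hx),
      hcls_eq C' hC' x ((Finset.mem_filter.1 h2).2 hx)])
  have hX : ∑ C ∈ F, ∑ e' ∈ E'.filter (fun e' => G e' ⊆ C), m e' ≤ ∑ e' ∈ E', m e' := by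
    rw [← Finset.sum_biUnion hdisjE]
    exact Finset.sum_le_sum_of_subset (fun e' he' => by
      obtain ⟨C, _, h⟩ := Finset.mem_biUnion.1 he'
      exact (Finset.mem_filter.1 h).1)
  have hFcard_le : F.card ≤ m e + 1 := le_trans Finset.card_image_le (le_of_eq (hsz e))
  have hsumE : (∑ e' ∈ E', m e') + m e = ∑ e' ∈ E, m e' := by
    rw [add_comm]; exact Finset.add_sum_erase E m he
  -- total bound
  have htot : ∑ C ∈ F, C.card ≤ ∑ C ∈ F, ((∑ e' ∈ E'.filter (fun e' => G e' ⊆ C), m e') + 1) :=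
    Finset.sum_le_sum hbnd
  have htot2 : ∑ C ∈ F, ((∑ e' ∈ E'.filter (fun e' => G e' ⊆ C), m e') + 1)
      = (∑ C ∈ F, ∑ e' ∈ E'.filter (fun e' => G e' ⊆ C), m e') + F.card := by
    rw [Finset.sum_add_distrib, Finset.sum_const, smul_eq_mul, mul_one]
  have hkey : ∑ C ∈ F, C.card = ∑ C ∈ F, ((∑ e' ∈ E'.filter (fun e' => G e' ⊆ C), m e') + 1) := by
    omega
  have hper : ∀ C ∈ F, C.card = (∑ e' ∈ E'.filter (fun e' => G e' ⊆ C), m e') + 1 :=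
    (Finset.sum_eq_sum_iff_of_le hbnd).1 hkey
  have hFcard : F.card = m e + 1 := by omega
  have hinj : Set.InjOn (cls G E') ↑(G e) := by
    apply Finset.injOn_of_card_image_eq
    rw [← hFdef, hFcard, hsz e]
  refine ⟨hcover, ?_, ?_⟩
  · intro v hv v' hv' hmem
    exact hinj hv' hv (hcls_eq _ (Finset.mem_image_of_mem _ hv) v' hmem)
  · intro v hv
    refine ⟨fun e' he' => (Finset.mem_filter.1 he').2, ?_, hper _ (Finset.mem_image_of_mem _ hv)⟩
    intro p hp q hq
    exact (reach_symm (reach_restrict (mem_cls.1 hp))).trans (reach_restrict (mem_cls.1 hq))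



lemma parent_exists (hsz : ∀ e, (G e).card = m e + 1) :
    ∀ (n : ℕ) (E : Finset (Fin M)) (S : Finset (Fin N)), E.card = n → HT G m E S →
      ∀ j ∈ S, ∀ r ∈ S, r ≠ j → ∃ i ∈ E, j ∈ G i ∧ ¬ Reach G (E.erase i) j r := by
  intro n
  induction n using Nat.strong_induction_on with
  | _ n IH =>
    intro E S hn h j hj r hr hrj
    obtain ⟨e₁, he₁, hje₁⟩ : ∃ e₁ ∈ E, j ∈ G e₁ := by
      rcases (h.2.1 j hj r hr).cases_head with heq | ⟨c, ⟨e, he, hj', _⟩, _⟩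
      · exact absurd heq.symm hrj
      · exact ⟨e, he, hj'⟩
    by_cases hres : Reach G (E.erase e₁) j r
    · set C := cls G (E.erase e₁) j with hCdef
      set EC := (E.erase e₁).filter (fun e' => G e' ⊆ C) with hECdef
      obtain ⟨hcover, huniq, hHTc⟩ := HT_decomp hsz h he₁
      have hHTC : HT G m EC C := hHTc j hje₁
      have hrC : r ∈ C := mem_cls.2 hres
      have hjC : j ∈ C := self_mem_cls
      have hECcard : EC.card < n := by
        calc EC.card ≤ (E.erase e₁).card := Finset.card_le_card (Finset.filter_subset _ _)
          _ < E.card := Finset.card_erase_lt_of_mem he₁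
          _ = n := hn
      obtain ⟨i, hiEC, hjGi, hnr⟩ := IH EC.card hECcard EC C rfl hHTC j hjC r hrC hrj
      have hiE : i ∈ E := Finset.mem_erase.1 (Finset.mem_filter.1 hiEC).1 |>.2
      refine ⟨i, hiE, hjGi, ?_⟩
      intro hre
      -- transfer: a global path from j to r avoiding i can be pushed into EC
      have htrans : ∀ q, Reach G (E.erase i) j q → q ∈ C → Reach G (EC.erase i) j q := by
        intro q hq
        induction hq with
        | refl => intro _; exact Relation.ReflTransGen.refl
        | @tail p q hjp hrel ihq =>
          intro hqC
          obtain ⟨e', he', hpe', hqe'⟩ := hrel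
          have he'E : e' ∈ E := (Finset.mem_erase.1 he').2
          have he'i : e' ≠ i := (Finset.mem_erase.1 he').1
          by_cases hee : e' = e₁
          · subst hee
            have : q = j := huniq j hje₁ q hqe' hqC
            subst this
            exact Relation.ReflTransGen.refl
          · have he'' : e' ∈ E.erase e₁ := Finset.mem_erase.2 ⟨hee, he'E⟩
            have hsub : G e' ⊆ C := edge_subset_cls he'' hqe' hqC
            have he'EC : e' ∈ EC.erase i :=
              Finset.mem_erase.2 ⟨he'i, Finset.mem_filter.2 ⟨he'', hsub⟩⟩
            exact (ihq (hsub hpe')).tail ⟨e', he'EC, hpe', hqe'⟩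
      exact hnr (htrans r hre hrC)
    · exact ⟨e₁, he₁, hje₁, hres⟩



set_option linter.unusedSectionVars false

section Global
variable (hsz : ∀ e, (G e).card = m e + 1) (hsum : (∑ e, m e) + 1 = N)
  (hconn : ∀ p q : Fin N, Reach G Finset.univ p q)

/-- number of edges `i` containing `j` such that `r` is not in `j`'s class after removing `i`. -/
noncomputable def cnt (G : Fin M → Finset (Fin N)) (j r : Fin N) : ℕ :=
  (Finset.univ.filter (fun i => j ∈ G i ∧ ¬ Reach G (Finset.univ.erase i) j r)).card

lemma cnt_self (j : Fin N) : cnt G j j = 0 := by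
  rw [cnt, Finset.card_eq_zero, Finset.filter_eq_empty_iff]
  rintro i - ⟨-, hnr⟩
  exact hnr Relation.ReflTransGen.refl

lemma filter_notreach (i : Fin M) (j : Fin N) :
    (Finset.univ.filter (fun r => ¬ Reach G (Finset.univ.erase i) j r)).card
      = N - (cls G (Finset.univ.erase i) j).card := by
  have h := Finset.card_filter_add_card_filter_not
    (s := (Finset.univ : Finset (Fin N))) (p := fun r => Reach G (Finset.univ.erase i) j r)
  rw [Finset.card_fin] at h
  have hc : (cls G (Finset.univ.erase i) j).card
      = (Finset.univ.filter (fun r => Reach G (Finset.univ.erase i) j r)).card := rfl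
  omega

lemma cnt_row (j : Fin N) :
    ∑ r, cnt G j r
      = ∑ i ∈ Finset.univ.filter (fun i => j ∈ G i),
          (N - (cls G (Finset.univ.erase i) j).card) := by
  unfold cnt
  simp_rw [Finset.card_filter]
  rw [Finset.sum_comm]
  rw [Finset.sum_filter]
  congr 1
  ext i
  by_cases hji : j ∈ G i
  · simp only [hji, true_and, if_true]
    rw [← Finset.card_filter]
    exact filter_notreach i j
  · simp [hji]

include hsz hsum hconn

lemma HT_top : HT G m Finset.univ Finset.univ :=
  ⟨fun _ _ => Finset.subset_univ _, fun p _ q _ => hconn p q, by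
    rw [Finset.card_fin]; omega⟩

lemma cover_top (i : Fin M) (q : Fin N) : ∃ v ∈ G i, q ∈ cls G (Finset.univ.erase i) v :=
  (HT_decomp hsz (HT_top hsz hsum hconn) (Finset.mem_univ i)).1 q (Finset.mem_univ q)

lemma uniq_top (i : Fin M) : ∀ v ∈ G i, ∀ v' ∈ G i,
    v' ∈ cls G (Finset.univ.erase i) v → v' = v :=
  (HT_decomp hsz (HT_top hsz hsum hconn) (Finset.mem_univ i)).2.1

lemma sum_cls_top (i : Fin M) :
    ∑ v ∈ G i, (cls G (Finset.univ.erase i) v).card = N := by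
  have hdisj : (↑(G i) : Set (Fin N)).PairwiseDisjoint (cls G (Finset.univ.erase i)) := by
    intro v hv v' hv' hne
    simp only [Finset.disjoint_left]
    intro x h1 h2
    refine hne (uniq_top hsz hsum hconn i v' hv' v hv ?_)
    rw [← cls_eq_of_mem h2, cls_eq_of_mem h1]
    exact self_mem_cls
  rw [← Finset.card_biUnion (fun v hv v' hv' hne => hdisj hv hv' hne)]
  have : (G i).biUnion (cls G (Finset.univ.erase i)) = Finset.univ := by
    apply Finset.eq_univ_of_forall
    intro q
    obtain ⟨v, hv, hq⟩ := cover_top hsz hsum hconn i q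
    exact Finset.mem_biUnion.2 ⟨v, hv, hq⟩
  rw [this, Finset.card_fin]

lemma cls_card_le (i : Fin M) {j : Fin N} (hj : j ∈ G i) :
    (cls G (Finset.univ.erase i) j).card + m i ≤ N := by
  have h1 := sum_cls_top hsz hsum hconn i
  rw [← Finset.add_sum_erase _ _ hj] at h1
  have h2 : ∀ v ∈ (G i).erase j, 1 ≤ (cls G (Finset.univ.erase i) v).card :=
    fun v _ => Finset.card_pos.2 ⟨v, self_mem_cls⟩
  have h3 : ((G i).erase j).card ≤ ∑ v ∈ (G i).erase j, (cls G (Finset.univ.erase i) v).card := by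
    calc ((G i).erase j).card = ∑ v ∈ (G i).erase j, 1 := by simp
      _ ≤ _ := Finset.sum_le_sum h2
  have h4 : ((G i).erase j).card = m i := by rw [Finset.card_erase_of_mem hj, hsz i]; omega
  omega

lemma cnt_pos {j r : Fin N} (hrj : r ≠ j) : 1 ≤ cnt G j r := by
  obtain ⟨i, _, hji, hnr⟩ := parent_exists hsz Finset.univ.card Finset.univ Finset.univ rfl
    (HT_top hsz hsum hconn) j (Finset.mem_univ j) r (Finset.mem_univ r) hrj
  exact Finset.card_pos.2 ⟨i, Finset.mem_filter.2 ⟨Finset.mem_univ i, hji, hnr⟩⟩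

lemma sum_NsubA (i : Fin M) :
    ∑ j ∈ G i, (N - (cls G (Finset.univ.erase i) j).card) = m i * N := by
  have h1 := sum_cls_top hsz hsum hconn i
  have h2 : ∀ j ∈ G i, (cls G (Finset.univ.erase i) j).card ≤ N := by
    intro j hj
    have := cls_card_le hsz hsum hconn i hj
    omega
  have h3 : ∑ j ∈ G i, (N - (cls G (Finset.univ.erase i) j).card)
      + ∑ j ∈ G i, (cls G (Finset.univ.erase i) j).card = ∑ j ∈ G i, N := by
    rw [← Finset.sum_add_distrib]
    apply Finset.sum_congr rfl
    intro j hj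
    have := h2 j hj
    omega
  rw [h1] at h3
  rw [Finset.sum_const, smul_eq_mul, hsz i] at h3
  -- (m i + 1) * N = Σ + N
  have : (m i + 1) * N = m i * N + N := by ring
  omega

lemma cnt_eq_one {j r : Fin N} (hrj : r ≠ j) : cnt G j r = 1 := by
  -- global double counting
  have htot : ∑ j' : Fin N, ∑ r' : Fin N, cnt G j' r' = (N - 1) * N := by
    have h1 : ∀ j' : Fin N, ∑ r' : Fin N, cnt G j' r'
        = ∑ i ∈ Finset.univ.filter (fun i => j' ∈ G i),
            (N - (cls G (Finset.univ.erase i) j').card) := fun j' => cnt_row j'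
    calc ∑ j' : Fin N, ∑ r' : Fin N, cnt G j' r'
        = ∑ j' : Fin N, ∑ i ∈ Finset.univ.filter (fun i => j' ∈ G i),
            (N - (cls G (Finset.univ.erase i) j').card) := by
          exact Finset.sum_congr rfl fun j' _ => h1 j'
      _ = ∑ j' : Fin N, ∑ i : Fin M,
            (if j' ∈ G i then N - (cls G (Finset.univ.erase i) j').card else 0) := by
          exact Finset.sum_congr rfl fun j' _ => (Finset.sum_filter _ _)
      _ = ∑ i : Fin M, ∑ j' : Fin N,
            (if j' ∈ G i then N - (cls G (Finset.univ.erase i) j').card else 0) :=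
          Finset.sum_comm
      _ = ∑ i : Fin M, ∑ j' ∈ G i, (N - (cls G (Finset.univ.erase i) j').card) := by
          exact Finset.sum_congr rfl fun i _ => (Finset.sum_filter _ _).symm.trans
            (by rw [Finset.filter_univ_mem])
      _ = ∑ i : Fin M, m i * N := Finset.sum_congr rfl fun i _ => sum_NsubA hsz hsum hconn i
      _ = (∑ i, m i) * N := by rw [Finset.sum_mul]
      _ = (N - 1) * N := by
          congr 1
          omega
  -- lower bound: each row-sum over r' ≠ j' is at least N - 1
  have hrow_ge : ∀ j' : Fin N, N - 1 ≤ ∑ r' : Fin N, cnt G j' r' := by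
    intro j'
    have : ∑ r' ∈ Finset.univ.erase j', (1 : ℕ) ≤ ∑ r' ∈ Finset.univ.erase j', cnt G j' r' :=
      Finset.sum_le_sum fun r' hr' => cnt_pos hsz hsum hconn (Finset.mem_erase.1 hr').1
    have hcard : (Finset.univ.erase j').card = N - 1 := by
      rw [Finset.card_erase_of_mem (Finset.mem_univ j'), Finset.card_fin]
    calc N - 1 = ∑ r' ∈ Finset.univ.erase j', (1 : ℕ) := by rw [Finset.sum_const, smul_eq_mul, mul_one, hcard]
      _ ≤ ∑ r' ∈ Finset.univ.erase j', cnt G j' r' := this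
      _ ≤ ∑ r' : Fin N, cnt G j' r' :=
          Finset.sum_le_sum_of_subset (Finset.erase_subset _ _)
  -- hence all row sums are exactly N - 1
  have hrow_eq : ∀ j' : Fin N, ∑ r' : Fin N, cnt G j' r' = N - 1 := by
    have := (Finset.sum_eq_sum_iff_of_le (s := (Finset.univ : Finset (Fin N)))
      (f := fun _ => N - 1) (g := fun j' => ∑ r' : Fin N, cnt G j' r')
      (fun j' _ => hrow_ge j')).1 ?_
    · exact fun j' => (this j' (Finset.mem_univ j')).symm
    · rw [htot, Finset.sum_const, Finset.card_fin, smul_eq_mul]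
      ring
  -- now fix j; all cnt j r' = 1 for r' ≠ j
  have hj := hrow_eq j
  have hsplit : ∑ r' : Fin N, cnt G j r' = ∑ r' ∈ Finset.univ.erase j, cnt G j r' := by
    rw [← Finset.add_sum_erase _ _ (Finset.mem_univ j), cnt_self, zero_add]
  rw [hsplit] at hj
  have hcard : (Finset.univ.erase j).card = N - 1 := by
    rw [Finset.card_erase_of_mem (Finset.mem_univ j), Finset.card_fin]
  have := (Finset.sum_eq_sum_iff_of_le (s := Finset.univ.erase j)
    (f := fun _ => 1) (g := fun r' => cnt G j r')
    (fun r' hr' => cnt_pos hsz hsum hconn (Finset.mem_erase.1 hr').1)).1 ?_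
  · exact (this r (Finset.mem_erase.2 ⟨hrj, Finset.mem_univ r⟩)).symm
  · rw [hj, Finset.sum_const, smul_eq_mul, mul_one, hcard]

lemma col_identity (j : Fin N) :
    ∑ i ∈ Finset.univ.filter (fun i => j ∈ G i),
        (N - (cls G (Finset.univ.erase i) j).card) = N - 1 := by
  rw [← cnt_row]
  have hsplit : ∑ r' : Fin N, cnt G j r' = ∑ r' ∈ Finset.univ.erase j, cnt G j r' := by
    rw [← Finset.add_sum_erase _ _ (Finset.mem_univ j), cnt_self, zero_add]
  rw [hsplit]
  have : ∀ r' ∈ Finset.univ.erase j, cnt G j r' = 1 :=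
    fun r' hr' => cnt_eq_one hsz hsum hconn (Finset.mem_erase.1 hr').1
  rw [Finset.sum_congr rfl this, Finset.sum_const, smul_eq_mul, mul_one,
    Finset.card_erase_of_mem (Finset.mem_univ j), Finset.card_fin]

end Global



section Construct
variable {M K : ℕ} {G : Fin M → Finset (Fin (K + 1))} {m : Fin M → ℕ}

/-- The candidate vertex associated to a hypertree. -/
noncomputable def YH (G : Fin M → Finset (Fin (K + 1))) (m : Fin M → ℕ) :
    Fin M → Fin (K + 1) → ℝ :=
  fun i j => if j ∈ G i then ((K + 1 - (cls G (Finset.univ.erase i) j).card : ℕ) : ℝ) / m i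
    else 0

variable (hm : ∀ i, 1 ≤ m i) (hsz : ∀ e, (G e).card = m e + 1)
  (hsum : (∑ e, m e) + 1 = K + 1)
  (hconn : ∀ p q : Fin (K + 1), Reach G Finset.univ p q)

include hm hsz hsum hconn

lemma YH_pos {i : Fin M} {j : Fin (K + 1)} (hj : j ∈ G i) : 0 < YH G m i j := by
  have h1 := cls_card_le hsz hsum hconn i hj
  have h2 : 1 ≤ K + 1 - (cls G (Finset.univ.erase i) j).card := by
    have := hm i; omega
  rw [YH, if_pos hj]
  apply div_pos
  · exact_mod_cast Nat.lt_of_lt_of_le Nat.zero_lt_one h2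
  · exact_mod_cast (hm i)

lemma YH_nonneg (i : Fin M) (j : Fin (K + 1)) : 0 ≤ YH G m i j := by
  by_cases hj : j ∈ G i
  · exact le_of_lt (YH_pos hm hsz hsum hconn hj)
  · rw [YH, if_neg hj]

lemma YH_supp {i : Fin M} {j : Fin (K + 1)} (hj : j ∉ G i) : YH G m i j = 0 := by
  rw [YH, if_neg hj]

lemma YH_row (i : Fin M) : ∑ j, YH G m i j = (K : ℝ) + 1 := by
  have hmR : (0 : ℝ) < m i := by exact_mod_cast hm i
  have h0 : ∑ j, YH G m i j
      = ∑ j ∈ G i, ((K + 1 - (cls G (Finset.univ.erase i) j).card : ℕ) : ℝ) / m i := by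
    simp only [YH]
    rw [← Finset.sum_filter, Finset.filter_univ_mem]
  rw [h0, ← Finset.sum_div]
  rw [← Nat.cast_sum]
  rw [sum_NsubA hsz hsum hconn i]
  push_cast
  field_simp

lemma YH_col (j : Fin (K + 1)) : ∑ i, (m i : ℝ) * YH G m i j = (K : ℝ) := by
  have h0 : ∀ i, (m i : ℝ) * YH G m i j
      = if j ∈ G i then ((K + 1 - (cls G (Finset.univ.erase i) j).card : ℕ) : ℝ) else 0 := by
    intro i
    by_cases hj : j ∈ G i
    · rw [YH, if_pos hj, if_pos hj]
      have hmR : (m i : ℝ) ≠ 0 := by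
        have := hm i; positivity
      field_simp
    · rw [YH, if_neg hj, if_neg hj, mul_zero]
  simp_rw [h0]
  rw [← Finset.sum_filter, ← Nat.cast_sum, col_identity hsz hsum hconn j]
  simp

lemma YH_mem : YH G m ∈ transPolytope (M := M) (K := K) m :=
  ⟨YH_nonneg hm hsz hsum hconn, YH_row hm hsz hsum hconn, YH_col hm hsz hsum hconn⟩

lemma YH_rigid (Z : Fin M → Fin (K + 1) → ℝ) (hZsupp : ∀ i j, j ∉ G i → Z i j = 0)
    (hZrow : ∀ i, ∑ j, Z i j = 0) (hZcol : ∀ j, ∑ i, (m i : ℝ) * Z i j = 0) : Z = 0 := by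
  funext i j
  show Z i j = 0
  by_cases hj : j ∈ G i
  · set C := cls G (Finset.univ.erase i) j with hC
    have h0 : ∑ q ∈ C, ∑ e, (m e : ℝ) * Z e q = 0 :=
      Finset.sum_eq_zero fun q _ => hZcol q
    rw [Finset.sum_comm] at h0
    have h1 : ∀ e, e ≠ i → ∑ q ∈ C, (m e : ℝ) * Z e q = 0 := by
      intro e hei
      by_cases hint : ∃ x ∈ G e, x ∈ C
      · obtain ⟨x, hx, hxC⟩ := hint
        have hsub : G e ⊆ C :=
          edge_subset_cls (Finset.mem_erase.2 ⟨hei, Finset.mem_univ e⟩) hx hxC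
        rw [← Finset.mul_sum]
        have : ∑ q ∈ C, Z e q = ∑ q, Z e q := by
          apply Finset.sum_subset (Finset.subset_univ C)
          intro q _ hq
          exact hZsupp e q (fun hqGe => hq (hsub hqGe))
        rw [this, hZrow e, mul_zero]
      · push_neg at hint
        apply Finset.sum_eq_zero
        intro q hq
        rw [hZsupp e q (fun hqGe => hint q hqGe hq), mul_zero]
    have h2 : ∑ q ∈ C, (m i : ℝ) * Z i q = (m i : ℝ) * Z i j := by
      rw [← Finset.mul_sum]
      congr 1
      apply Finset.sum_eq_single_of_mem j self_mem_cls
      intro q hqC hqj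
      apply hZsupp i q
      intro hqGi
      exact hqj (uniq_top hsz hsum hconn i j hj q hqGi hqC)
    rw [Finset.sum_eq_single_of_mem i (Finset.mem_univ i) (fun e _ hei => h1 e hei), h2] at h0
    have hmR : (m i : ℝ) ≠ 0 := by have := hm i; positivity
    exact (mul_eq_zero.1 h0).resolve_left hmR
  · exact hZsupp i j hj

lemma YH_extreme : YH G m ∈ Set.extremePoints ℝ (transPolytope (M := M) (K := K) m) := by
  rw [mem_extremePoints]
  refine ⟨YH_mem hm hsz hsum hconn, ?_⟩
  intro Y₁ hY₁ Y₂ hY₂ hseg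
  obtain ⟨a, b, ha, hb, hab, habY⟩ := hseg
  have hzero : ∀ i j, j ∉ G i → Y₁ i j = 0 ∧ Y₂ i j = 0 := by
    intro i j hj
    have h0 : a * Y₁ i j + b * Y₂ i j = 0 := by
      have := congrFun (congrFun habY i) j
      simpa [YH_supp hm hsz hsum hconn hj] using this
    have h1 := hY₁.1 i j
    have h2 := hY₂.1 i j
    constructor
    · nlinarith
    · nlinarith
  have hZ : Y₁ - Y₂ = 0 := by
    apply YH_rigid hm hsz hsum hconn
    · intro i j hj
      have := hzero i j hj
      simp [this.1, this.2]
    · intro i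
      have : ∑ j, (Y₁ i j - Y₂ i j) = 0 := by
        rw [Finset.sum_sub_distrib, hY₁.2.1 i, hY₂.2.1 i]; ring
      simpa using this
    · intro j
      have : ∑ i, (m i : ℝ) * (Y₁ i j - Y₂ i j) = 0 := by
        simp_rw [mul_sub]
        rw [Finset.sum_sub_distrib, hY₁.2.2 j, hY₂.2.2 j]; ring
      simpa using this
  have h12 : Y₁ = Y₂ := sub_eq_zero.1 hZ
  constructor
  · rw [← habY, h12, ← add_smul, hab, one_smul]
  · rw [← habY, h12, ← add_smul, hab, one_smul]

lemma YH_suppHyp : suppHyp (YH G m) = fun i => ↑(G i) := by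
  funext i
  ext j
  simp only [suppHyp, Set.mem_setOf_eq, Finset.coe_sort_coe, Finset.mem_coe]
  constructor
  · intro h
    by_contra hj
    rw [YH_supp hm hsz hsum hconn hj] at h
    exact lt_irrefl 0 h
  · intro h
    exact YH_pos hm hsz hsum hconn h

/-- the doubly stochastic matrices in the decomposition -/
noncomputable def BB (G : Fin M → Finset (Fin (K + 1))) (m : Fin M → ℕ) (r : Fin (K + 1)) :
    Fin M → Fin K → ℝ :=
  fun i k => if r.succAbove k ∈ G i ∧ ¬ Reach G (Finset.univ.erase i) (r.succAbove k) r
    then 1 / (m i : ℝ) else 0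

lemma reach_filter_card (i : Fin M) (r : Fin (K + 1)) :
    ((G i).filter (fun j => Reach G (Finset.univ.erase i) j r)).card = 1 := by
  obtain ⟨v, hv, hrv⟩ := cover_top hsz hsum hconn i r
  rw [Finset.card_eq_one]
  refine ⟨v, ?_⟩
  rw [Finset.eq_singleton_iff_unique_mem]
  refine ⟨Finset.mem_filter.2 ⟨hv, mem_cls.1 hrv⟩, ?_⟩
  intro j hj
  obtain ⟨hjG, hjr⟩ := Finset.mem_filter.1 hj
  apply uniq_top hsz hsum hconn i v hv j hjG
  rw [mem_cls]
  exact (mem_cls.1 hrv).trans (reach_symm hjr)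

lemma BB_mem (r : Fin (K + 1)) : BB G m r ∈ stochPolytope m := by
  have hmR : ∀ i, (0 : ℝ) < m i := fun i => by exact_mod_cast hm i
  refine ⟨?_, ?_, ?_⟩
  · intro i k
    rw [BB]
    split
    · positivity
    · exact le_refl 0
  · intro i
    set g : Fin (K + 1) → ℝ := fun j =>
      if j ∈ G i ∧ ¬ Reach G (Finset.univ.erase i) j r then 1 / (m i : ℝ) else 0 with hg
    have hsumg : ∑ j, g j = g r + ∑ k, g (r.succAbove k) := Fin.sum_univ_succAbove g r
    have hgr : g r = 0 := by
      rw [hg]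
      simp only [not_true_eq_false, and_false, if_neg]
      simp [Relation.ReflTransGen.refl]
    have hBk : ∀ k, BB G m r i k = g (r.succAbove k) := fun k => rfl
    have hsum1 : ∑ j, g j = 1 := by
      have hrw : ∀ j, g j = if j ∈ G i then
          (if ¬ Reach G (Finset.univ.erase i) j r then 1 / (m i : ℝ) else 0) else 0 := by
        intro j
        by_cases h1 : j ∈ G i <;> by_cases h2 : Reach G (Finset.univ.erase i) j r <;>
          simp [hg, h1, h2]
      simp_rw [hrw]
      rw [← Finset.sum_filter, Finset.filter_univ_mem, Finset.sum_ite, Finset.sum_const,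
        Finset.sum_const, smul_zero, add_zero, nsmul_eq_mul]
      have hc : ((G i).filter (fun j => ¬ Reach G (Finset.univ.erase i) j r)).card = m i := by
        have h1 := Finset.card_filter_add_card_filter_not
          (s := G i) (p := fun j => Reach G (Finset.univ.erase i) j r)
        rw [hsz i, reach_filter_card hm hsz hsum hconn i r] at h1
        omega
      rw [hc]
      have hne : (m i : ℝ) ≠ 0 := ne_of_gt (hmR i)
      field_simp
    calc ∑ k, BB G m r i k = ∑ k, g (r.succAbove k) := by simp_rw [hBk]
      _ = ∑ j, g j - g r := by rw [hsumg]; ring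
      _ = 1 := by rw [hsum1, hgr]; ring
  · intro k
    set j := r.succAbove k with hj
    have hjr : r ≠ j := (Fin.succAbove_ne r k).symm
    have hone : ∀ i, (m i : ℝ) * BB G m r i k
        = if j ∈ G i ∧ ¬ Reach G (Finset.univ.erase i) j r then 1 else 0 := by
      intro i
      rw [BB]
      split
      · have : (m i : ℝ) ≠ 0 := by have := hmR i; linarith
        field_simp
      · rw [mul_zero]
    simp_rw [hone]
    rw [Finset.sum_boole]
    have := cnt_eq_one hsz hsum hconn (G := G) hjr
    rw [cnt] at this
    rw [this]
    norm_num

lemma BB_sum : ∑ r, insertZeroCol r (BB G m r) = YH G m := by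
  funext i j
  have happ : (∑ r, insertZeroCol r (BB G m r)) i j
      = ∑ r, insertZeroCol r (BB G m r) i j := by
    rw [Finset.sum_apply, Finset.sum_apply]
  have hval : ∀ r, insertZeroCol r (BB G m r) i j
      = if j = r then 0 else
        (if j ∈ G i ∧ ¬ Reach G (Finset.univ.erase i) j r then 1 / (m i : ℝ) else 0) := by
    intro r
    by_cases hjr : j = r
    · subst hjr
      simp [insertZeroCol, Fin.insertNth_apply_same]
    · obtain ⟨k, hk⟩ := Fin.exists_succAbove_eq (Ne.symm (Ne.intro hjr) : r ≠ j).symm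
      rw [if_neg hjr, insertZeroCol, ← hk, Fin.insertNth_apply_succAbove]
      rw [BB, hk]
  rw [happ]
  simp_rw [hval]
  rw [← Finset.add_sum_erase _ _ (Finset.mem_univ j), if_pos rfl, zero_add]
  have herase : ∀ r ∈ Finset.univ.erase j,
      (if j = r then (0:ℝ) else
        (if j ∈ G i ∧ ¬ Reach G (Finset.univ.erase i) j r then 1 / (m i : ℝ) else 0))
      = (if j ∈ G i ∧ ¬ Reach G (Finset.univ.erase i) j r then 1 / (m i : ℝ) else 0) := by
    intro r hr
    rw [if_neg (fun h => (Finset.mem_erase.1 hr).1 h.symm)]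
  rw [Finset.sum_congr rfl herase]
  by_cases hjG : j ∈ G i
  · simp_rw [hjG, true_and]
    rw [Finset.sum_ite, Finset.sum_const, Finset.sum_const, smul_zero, add_zero, nsmul_eq_mul]
    rw [Finset.filter_erase, Finset.erase_eq_of_notMem (by
      simp only [Finset.mem_filter]
      rintro ⟨-, hnr⟩
      exact hnr Relation.ReflTransGen.refl)]
    rw [filter_notreach i j, YH, if_pos hjG, mul_one_div]
  · have : ∀ r ∈ Finset.univ.erase j,
        (if j ∈ G i ∧ ¬ Reach G (Finset.univ.erase i) j r then 1 / (m i : ℝ) else 0) = 0 := by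
      intro r _
      rw [if_neg (fun h => hjG h.1)]
    rw [Finset.sum_congr rfl this, Finset.sum_const, smul_zero, YH, if_neg hjG]

end Construct

section Extreme
variable {M K : ℕ} {m : Fin M → ℕ}

lemma extreme_rigid {Y : Fin M → Fin (K + 1) → ℝ}
    (hY : Y ∈ Set.extremePoints ℝ (transPolytope (M := M) (K := K) m))
    (Z : Fin M → Fin (K + 1) → ℝ) (hsupp : ∀ i j, Y i j = 0 → Z i j = 0)
    (hrow : ∀ i, ∑ j, Z i j = 0) (hcol : ∀ j, ∑ i, (m i : ℝ) * Z i j = 0) : Z = 0 := by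
  obtain ⟨hYT, hext⟩ := mem_extremePoints.1 hY
  rcases Nat.eq_zero_or_pos M with hM | hM
  · funext i j
    exact absurd i.2 (by omega)
  have hne : (Finset.univ ×ˢ Finset.univ : Finset (Fin M × Fin (K + 1))).Nonempty := by
    refine ⟨(⟨0, hM⟩, 0), Finset.mem_product.2 ⟨Finset.mem_univ _, Finset.mem_univ _⟩⟩
  set f : Fin M × Fin (K + 1) → ℝ := fun p =>
    if 0 < Y p.1 p.2 ∧ Z p.1 p.2 ≠ 0 then Y p.1 p.2 / |Z p.1 p.2| else 1 with hf
  set ε : ℝ := (Finset.univ ×ˢ Finset.univ).inf' hne f with hε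
  have hfpos : ∀ p, 0 < f p := by
    intro p
    by_cases h : 0 < Y p.1 p.2 ∧ Z p.1 p.2 ≠ 0
    · simp only [hf]
      rw [if_pos h]
      exact div_pos h.1 (abs_pos.2 h.2)
    · simp only [hf]
      rw [if_neg h]
      norm_num
  have hεpos : 0 < ε := by
    rw [hε]
    rw [Finset.lt_inf'_iff]
    exact fun p _ => hfpos p
  have hεle : ∀ i j, ε * |Z i j| ≤ Y i j := by
    intro i j
    by_cases hZ : Z i j = 0
    · rw [hZ]
      simpa using hYT.1 i j
    · have hYpos : 0 < Y i j := by
        rcases lt_or_eq_of_le (hYT.1 i j) with h | h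
        · exact h
        · exact absurd (hsupp i j h.symm) hZ
      have h1 : ε ≤ f (i, j) := Finset.inf'_le f
        (Finset.mem_product.2 ⟨Finset.mem_univ _, Finset.mem_univ _⟩)
      rw [hf] at h1
      simp only [hYpos, hZ, ne_eq, not_false_eq_true, and_self, if_true] at h1
      have habs : 0 < |Z i j| := abs_pos.2 hZ
      calc ε * |Z i j| ≤ (Y i j / |Z i j|) * |Z i j| := by
            exact mul_le_mul_of_nonneg_right h1 (le_of_lt habs)
        _ = Y i j := by field_simp
  have hmem : ∀ (s : ℝ), |s| ≤ ε → Y + s • Z ∈ transPolytope (M := M) (K := K) m := by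
    intro s hs
    refine ⟨?_, ?_, ?_⟩
    · intro i j
      have h1 : |s * Z i j| ≤ ε * |Z i j| := by
        rw [abs_mul]
        exact mul_le_mul_of_nonneg_right hs (abs_nonneg _)
      have h2 := hεle i j
      have h3 : -(s * Z i j) ≤ |s * Z i j| := neg_le_abs _
      show 0 ≤ Y i j + s * Z i j
      linarith
    · intro i
      show ∑ j, (Y i j + s * Z i j) = _
      rw [Finset.sum_add_distrib, hYT.2.1 i, ← Finset.mul_sum, hrow i, mul_zero, add_zero]
    · intro j
      show ∑ i, (m i : ℝ) * (Y i j + s * Z i j) = _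
      have : ∀ i, (m i : ℝ) * (Y i j + s * Z i j)
          = (m i : ℝ) * Y i j + s * ((m i : ℝ) * Z i j) := by intro i; ring
      simp_rw [this]
      rw [Finset.sum_add_distrib, hYT.2.2 j, ← Finset.mul_sum, hcol j, mul_zero, add_zero]
  have h1 : Y + (-ε) • Z ∈ transPolytope (M := M) (K := K) m := by
    apply hmem
    rw [abs_neg, abs_of_pos hεpos]
  have h2 : Y + ε • Z ∈ transPolytope (M := M) (K := K) m := by
    apply hmem
    rw [abs_of_pos hεpos]
  have hseg : Y ∈ openSegment ℝ (Y + (-ε) • Z) (Y + ε • Z) := by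
    refine ⟨1/2, 1/2, by norm_num, by norm_num, by norm_num, ?_⟩
    funext i j
    show (1/2 : ℝ) * (Y i j + -ε * Z i j) + (1/2 : ℝ) * (Y i j + ε * Z i j) = Y i j
    ring
  have := (hext _ h1 _ h2 hseg).1
  have hZ0 : (-ε) • Z = 0 := by
    have h := congrArg (fun W => W - Y) this
    simpa [add_sub_cancel_left] using h
  funext i j
  have := congrFun (congrFun hZ0 i) j
  simp only [Pi.smul_apply, smul_eq_mul, Pi.zero_apply] at this ⊢
  have hεne : (-ε) ≠ 0 := by linarith
  exact (mul_eq_zero.1 this).resolve_left hεne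

lemma trans_supp_zero {Y : Fin M → Fin (K + 1) → ℝ} (hY : Y ∈ transPolytope (M := M) (K := K) m)
    {i : Fin M} {j : Fin (K + 1)} (hj : j ∉ suppHyp Y i) : Y i j = 0 :=
  le_antisymm (not_lt.1 hj) (hY.1 i j)

lemma trans_connected (hm : ∀ i, 1 ≤ m i) (hw : ∑ i, m i = K)
    {Y : Fin M → Fin (K + 1) → ℝ} (hY : Y ∈ transPolytope (M := M) (K := K) m) :
    SConnected (suppHyp Y) := by
  intro u v
  set step : Fin (K + 1) → Fin (K + 1) → Prop :=
    fun p q => ∃ e, p ∈ suppHyp Y e ∧ q ∈ suppHyp Y e with hstep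
  set AF : Finset (Fin (K + 1)) :=
    Finset.univ.filter (fun q => Relation.ReflTransGen step u q) with hAF
  have huA : u ∈ AF := Finset.mem_filter.2 ⟨Finset.mem_univ _, Relation.ReflTransGen.refl⟩
  set I : Finset (Fin M) := Finset.univ.filter (fun i => ∀ j, 0 < Y i j → j ∈ AF) with hI
  have hIn : ∀ i, i ∉ I → ∀ j ∈ AF, Y i j = 0 := by
    intro i hi j hj
    by_contra hYij
    have hYpos : 0 < Y i j := lt_of_le_of_ne (hY.1 i j) (Ne.symm hYij)
    apply hi
    rw [hI, Finset.mem_filter]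
    refine ⟨Finset.mem_univ _, fun j' hj' => ?_⟩
    rw [hAF, Finset.mem_filter]
    refine ⟨Finset.mem_univ _, ?_⟩
    exact ((Finset.mem_filter.1 hj).2).tail ⟨i, hYpos, hj'⟩
  have hkey : (K : ℝ) * AF.card = (K + 1) * ∑ i ∈ I, (m i : ℝ) := by
    have h1 : ∑ j ∈ AF, (K : ℝ) = ∑ j ∈ AF, ∑ i, (m i : ℝ) * Y i j :=
      Finset.sum_congr rfl fun j _ => (hY.2.2 j).symm
    rw [Finset.sum_const, nsmul_eq_mul, mul_comm] at h1
    rw [Finset.sum_comm] at h1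
    have h2 : ∀ i, ∑ j ∈ AF, (m i : ℝ) * Y i j
        = if i ∈ I then (m i : ℝ) * ((K : ℝ) + 1) else 0 := by
      intro i
      by_cases hi : i ∈ I
      · rw [if_pos hi, ← Finset.mul_sum]
        congr 1
        have : ∑ j ∈ AF, Y i j = ∑ j, Y i j := by
          apply Finset.sum_subset (Finset.subset_univ _)
          intro j _ hj
          by_contra hYij
          have hYpos : 0 < Y i j := lt_of_le_of_ne (hY.1 i j) (Ne.symm hYij)
          exact hj ((Finset.mem_filter.1 hi).2 j hYpos)
        rw [this, hY.2.1 i]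
      · rw [if_neg hi]
        exact Finset.sum_eq_zero fun j hj => by rw [hIn i hi j hj, mul_zero]
    rw [Finset.sum_congr rfl fun i _ => h2 i] at h1
    rw [Finset.sum_ite_mem, Finset.univ_inter] at h1
    have h3 : ∑ i ∈ I, (m i : ℝ) * ((K : ℝ) + 1) = ((K : ℝ) + 1) * ∑ i ∈ I, (m i : ℝ) := by
      rw [Finset.mul_sum]
      exact Finset.sum_congr rfl fun i _ => mul_comm _ _
    linarith [h1, h3]
  -- pass to natural numbers
  have hkeyN : K * AF.card = (K + 1) * ∑ i ∈ I, m i := by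
    have : ((K * AF.card : ℕ) : ℝ) = (((K + 1) * ∑ i ∈ I, m i : ℕ) : ℝ) := by
      push_cast
      convert hkey using 2
    exact_mod_cast this
  have hdvd : (K + 1) ∣ AF.card := by
    have h1 : (K + 1) ∣ K * AF.card := ⟨_, hkeyN⟩
    have hcop : Nat.Coprime (K + 1) K := by
      unfold Nat.Coprime
      rw [Nat.add_comm, Nat.gcd_add_self_left, Nat.gcd_one_left]
    exact hcop.dvd_of_dvd_mul_left h1
  have hcardle : AF.card ≤ K + 1 := by
    calc AF.card ≤ (Finset.univ : Finset (Fin (K + 1))).card := Finset.card_le_card (Finset.subset_univ _)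
      _ = K + 1 := Finset.card_fin _
  have hcardpos : 0 < AF.card := Finset.card_pos.2 ⟨u, huA⟩
  have hcard : AF.card = K + 1 := le_antisymm hcardle (Nat.le_of_dvd hcardpos hdvd)
  have hAFuniv : AF = Finset.univ := Finset.eq_univ_of_card _ (by rw [hcard, Fintype.card_fin])
  have hv : v ∈ AF := hAFuniv ▸ Finset.mem_univ v
  exact (Finset.mem_filter.1 hv).2

lemma supp_card_ge (hm : ∀ i, 1 ≤ m i) {Y : Fin M → Fin (K + 1) → ℝ}
    (hY : Y ∈ transPolytope (M := M) (K := K) m) (i : Fin M) :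
    m i + 1 ≤ (Finset.univ.filter (fun j => 0 < Y i j)).card := by
  by_contra hcon
  push_neg at hcon
  have hd : (Finset.univ.filter (fun j => 0 < Y i j)).card ≤ m i := by omega
  have hmpos : (0 : ℝ) < m i := by exact_mod_cast hm i
  have hb : ∀ j, Y i j ≤ (K : ℝ) / m i := by
    intro j
    have h1 : (m i : ℝ) * Y i j ≤ (K : ℝ) := by
      rw [← hY.2.2 j]
      exact Finset.single_le_sum (f := fun e => (m e : ℝ) * Y e j)
        (fun e _ => mul_nonneg (by positivity) (hY.1 e j)) (Finset.mem_univ i)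
    rw [le_div_iff₀ hmpos, mul_comm]
    exact h1
  have hzero : ∀ j ∈ (Finset.univ : Finset (Fin (K + 1))),
      j ∉ Finset.univ.filter (fun j => 0 < Y i j) → Y i j = 0 := by
    intro j _ hj
    have h1 : ¬ 0 < Y i j := fun hp => hj (Finset.mem_filter.2 ⟨Finset.mem_univ j, hp⟩)
    linarith [hY.1 i j, not_lt.1 h1]
  have hrow : (K : ℝ) + 1 = ∑ j ∈ Finset.univ.filter (fun j => 0 < Y i j), Y i j := by
    rw [← hY.2.1 i]
    exact (Finset.sum_subset (Finset.filter_subset _ _) hzero).symm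
  have hsum : ∑ j ∈ Finset.univ.filter (fun j => 0 < Y i j), Y i j
      ≤ ((Finset.univ.filter (fun j => 0 < Y i j)).card : ℝ) * ((K : ℝ) / m i) := by
    have := Finset.sum_le_card_nsmul (Finset.univ.filter (fun j => 0 < Y i j))
      (fun j => Y i j) ((K : ℝ) / m i) (fun j _ => hb j)
    rwa [nsmul_eq_mul] at this
  have hKm : (0 : ℝ) ≤ (K : ℝ) / m i := by positivity
  have hfin : ((Finset.univ.filter (fun j => 0 < Y i j)).card : ℝ) * ((K : ℝ) / m i)
      ≤ (m i : ℝ) * ((K : ℝ) / m i) :=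
    mul_le_mul_of_nonneg_right (by exact_mod_cast hd) hKm
  have : (m i : ℝ) * ((K : ℝ) / m i) = (K : ℝ) := by field_simp
  linarith

lemma supp_sum_le {Y : Fin M → Fin (K + 1) → ℝ}
    (hY : Y ∈ Set.extremePoints ℝ (transPolytope (M := M) (K := K) m)) :
    ∑ i, (Finset.univ.filter (fun j => 0 < Y i j)).card ≤ M + K := by
  classical
  set S := {p : Fin M × Fin (K + 1) // 0 < Y p.1 p.2} with hS
  set ext : (S → ℝ) → (Fin M → Fin (K + 1) → ℝ) :=
    fun z i j => if h : 0 < Y i j then z ⟨(i, j), h⟩ else 0 with hext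
  have hext_add : ∀ z z' : S → ℝ, ext (z + z') = ext z + ext z' := by
    intro z z'
    funext i j
    show (if h : 0 < Y i j then (z + z') ⟨(i, j), h⟩ else 0) = _
    by_cases h : 0 < Y i j <;> simp [hext, h]
  have hext_smul : ∀ (c : ℝ) (z : S → ℝ), ext (c • z) = c • ext z := by
    intro c z
    funext i j
    show (if h : 0 < Y i j then (c • z) ⟨(i, j), h⟩ else 0) = _
    by_cases h : 0 < Y i j <;> simp [hext, h]
  set Φ : (S → ℝ) →ₗ[ℝ] ((Fin M → ℝ) × (Fin (K + 1) → ℝ)) :=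
    { toFun := fun z => (fun i => ∑ j, ext z i j, fun j => ∑ i, (m i : ℝ) * ext z i j),
      map_add' := by
        intro z z'
        rw [hext_add]
        refine Prod.ext ?_ ?_ <;> funext x <;>
          simp [Finset.sum_add_distrib, mul_add]
      map_smul' := by
        intro c z
        rw [hext_smul]
        refine Prod.ext ?_ ?_ <;> funext x <;>
          simp [Finset.mul_sum, mul_left_comm] } with hΦ
  set L : ((Fin M → ℝ) × (Fin (K + 1) → ℝ)) →ₗ[ℝ] ℝ :=
    { toFun := fun rc => (∑ i, (m i : ℝ) * rc.1 i) - ∑ j, rc.2 j,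
      map_add' := by
        intro rc rc'
        simp only [Prod.fst_add, Prod.snd_add, Pi.add_apply, mul_add]
        rw [Finset.sum_add_distrib, Finset.sum_add_distrib]
        ring
      map_smul' := by
        intro c rc
        simp only [Prod.smul_fst, Prod.smul_snd, Pi.smul_apply, smul_eq_mul, RingHom.id_apply]
        rw [mul_sub, Finset.mul_sum, Finset.mul_sum]
        have h1 : ∀ x ∈ (Finset.univ : Finset (Fin M)),
            (m x : ℝ) * (c * rc.1 x) = c * ((m x : ℝ) * rc.1 x) := fun x _ => by ring
        rw [Finset.sum_congr rfl h1] } with hL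
  have hrange : ∀ z, Φ z ∈ LinearMap.ker L := by
    intro z
    rw [LinearMap.mem_ker]
    show (∑ i, (m i : ℝ) * ∑ j, ext z i j) - ∑ j, ∑ i, (m i : ℝ) * ext z i j = 0
    simp_rw [Finset.mul_sum]
    exact sub_eq_zero_of_eq Finset.sum_comm
  have hinj : Function.Injective Φ := by
    refine LinearMap.ker_eq_bot.1 (LinearMap.ker_eq_bot'.2 ?_)
    intro z hz
    have hZ : ext z = 0 := by
      apply extreme_rigid hY
      · intro i j hYij
        show (if h : 0 < Y i j then z ⟨(i, j), h⟩ else 0) = 0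
        rw [dif_neg (by rw [hYij]; exact lt_irrefl 0)]
      · intro i
        exact congrFun (congrArg Prod.fst hz) i
      · intro j
        exact congrFun (congrArg Prod.snd hz) j
    funext p
    have := congrFun (congrFun hZ p.1.1) p.1.2
    rw [hext] at this
    simpa [dif_pos p.2] using this
  -- dimension count
  have hcardS : Fintype.card S = ∑ i, (Finset.univ.filter (fun j => 0 < Y i j)).card := by
    rw [Fintype.card_congr (Equiv.subtypeProdEquivSigmaSubtype (fun (i : Fin M) (j : Fin (K + 1)) => 0 < Y i j))]
    rw [Fintype.card_sigma]
    exact Finset.sum_congr rfl fun i _ => Fintype.card_subtype _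
  have hL_surj : Function.Surjective L := by
    intro t
    refine ⟨(0, fun _ => -(t / (K + 1))), ?_⟩
    show (∑ i, (m i : ℝ) * (0 : ℝ)) - (∑ _j : Fin (K + 1), -(t / (K + 1))) = t
    rw [Finset.sum_const, Finset.card_fin]
    simp
    field_simp
  have hker : Module.finrank ℝ (LinearMap.ker L) = M + K := by
    have h1 := LinearMap.finrank_range_add_finrank_ker L
    have h2 : LinearMap.range L = ⊤ := LinearMap.range_eq_top.2 hL_surj
    rw [h2, finrank_top] at h1
    have h3 : Module.finrank ℝ ((Fin M → ℝ) × (Fin (K + 1) → ℝ)) = M + (K + 1) := by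
      rw [Module.finrank_prod, Module.finrank_fintype_fun_eq_card,
        Module.finrank_fintype_fun_eq_card, Fintype.card_fin, Fintype.card_fin]
    rw [h3] at h1
    have h4 : Module.finrank ℝ ℝ = 1 := Module.finrank_self ℝ
    rw [h4] at h1
    omega
  have hfin : Module.finrank ℝ (S → ℝ) ≤ Module.finrank ℝ (LinearMap.ker L) := by
    have hΦ' : Function.Injective (Φ.codRestrict (LinearMap.ker L) hrange) :=
      fun x y hxy => hinj (congrArg Subtype.val hxy)
    exact LinearMap.finrank_le_finrank_of_injective hΦ'
  rw [Module.finrank_fintype_fun_eq_card, hcardS, hker] at hfin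
  exact hfin

end Extreme

lemma sum_mem_pointwise {ι α : Type*} [AddCommMonoid α] (s : Finset ι) (f : ι → α)
    (T : ι → Set α) (h : ∀ i ∈ s, f i ∈ T i) : (∑ i ∈ s, f i) ∈ ∑ i ∈ s, T i := by
  classical
  induction s using Finset.cons_induction with
  | empty => simp
  | cons a s ha ih =>
    rw [Finset.sum_cons, Finset.sum_cons]
    exact Set.add_mem_add (h a (Finset.mem_cons_self a s))
      (ih fun i hi => h i (Finset.mem_cons.2 (Or.inr hi)))

lemma ncard_eq_filter_card {M K : ℕ} (Y : Fin M → Fin (K + 1) → ℝ) (i : Fin M) :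
    (suppHyp Y i).ncard = (Finset.univ.filter (fun j => 0 < Y i j)).card := by
  rw [← Nat.card_coe_set_eq, Nat.card_eq_fintype_card]
  rw [Fintype.card_subtype]
  exact congrArg Finset.card (Finset.filter_congr fun j _ => Iff.rfl)

lemma extreme_supp_sizes {M K : ℕ} {m : Fin M → ℕ} (hm : ∀ i, 1 ≤ m i) (hw : ∑ i, m i = K)
    {Y : Fin M → Fin (K + 1) → ℝ}
    (hY : Y ∈ Set.extremePoints ℝ (transPolytope (M := M) (K := K) m)) (i : Fin M) :
    (Finset.univ.filter (fun j => 0 < Y i j)).card = m i + 1 := by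
  have hge : ∀ i, m i + 1 ≤ (Finset.univ.filter (fun j => 0 < Y i j)).card :=
    fun i => supp_card_ge hm hY.1 i
  have hle : ∑ i, (Finset.univ.filter (fun j => 0 < Y i j)).card ≤ M + K := supp_sum_le hY
  have hsumf : ∑ i, (m i + 1) = K + M := by
    rw [Finset.sum_add_distrib, hw, Finset.sum_const, Finset.card_fin, smul_eq_mul, mul_one]
  have heq : ∑ i, (m i + 1) = ∑ i, (Finset.univ.filter (fun j => 0 < Y i j)).card := by
    have h1 : ∑ i, (m i + 1) ≤ ∑ i, (Finset.univ.filter (fun j => 0 < Y i j)).card :=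
      Finset.sum_le_sum fun i _ => hge i
    omega
  exact ((Finset.sum_eq_sum_iff_of_le fun i _ => hge i).1 heq i (Finset.mem_univ i)).symm

lemma extreme_eq_of_supp {M K : ℕ} {m : Fin M → ℕ}
    {Y Y' : Fin M → Fin (K + 1) → ℝ}
    (hY : Y ∈ Set.extremePoints ℝ (transPolytope (M := M) (K := K) m))
    (hY'T : Y' ∈ transPolytope (M := M) (K := K) m)
    (hzero : ∀ i j, Y i j = 0 → Y' i j = 0) : Y = Y' := by
  have hYT : Y ∈ transPolytope (M := M) (K := K) m := hY.1
  have hZ : Y - Y' = 0 := by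
    apply extreme_rigid hY
    · intro i j h0
      show Y i j - Y' i j = 0
      rw [h0, hzero i j h0, sub_zero]
    · intro i
      show ∑ j, (Y i j - Y' i j) = 0
      rw [Finset.sum_sub_distrib, hYT.2.1 i, hY'T.2.1 i, sub_self]
    · intro j
      show ∑ i, (m i : ℝ) * (Y i j - Y' i j) = 0
      simp_rw [mul_sub]
      rw [Finset.sum_sub_distrib, hYT.2.2 j, hY'T.2.2 j, sub_self]
  exact sub_eq_zero.1 hZ

end TPVert

/-- Taking the support hypergraph is a bijection between the vertices (extreme points) of
the weighted transportation polytope and the connected linkage hypergraphs (edge `i` has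
exactly `m i + 1` vertices); moreover every vertex of `T` lies in the Minkowski sum
`Σ_j φ_j(D)`. -/
theorem vertices_transPolytope {M K : ℕ} (m : Fin M → ℕ)
    (hm : ∀ i, 1 ≤ m i) (hw : ∑ i, m i = K) :
    (∀ Y ∈ Set.extremePoints ℝ (transPolytope (M := M) (K := K) m),
        (∀ i, (suppHyp Y i).ncard = m i + 1) ∧ SConnected (suppHyp Y)) ∧
    (∀ Y ∈ Set.extremePoints ℝ (transPolytope (M := M) (K := K) m),
      ∀ Y' ∈ Set.extremePoints ℝ (transPolytope (M := M) (K := K) m),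
        suppHyp Y = suppHyp Y' → Y = Y') ∧
    (∀ H : Fin M → Set (Fin (K + 1)), (∀ i, (H i).ncard = m i + 1) → SConnected H →
        ∃ Y ∈ Set.extremePoints ℝ (transPolytope (M := M) (K := K) m), suppHyp Y = H) ∧
    (∀ Y ∈ Set.extremePoints ℝ (transPolytope (M := M) (K := K) m),
        Y ∈ ∑ j : Fin (K + 1), (insertZeroCol j '' stochPolytope m)) := by
  classical
  open TPVert in
  refine ⟨?_, ?_, ?_, ?_⟩
  · -- sizes and connectivity
    intro Y hY
    constructor
    · intro i
      rw [TPVert.ncard_eq_filter_card]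
      exact TPVert.extreme_supp_sizes hm hw hY i
    · exact TPVert.trans_connected hm hw hY.1
  · -- injectivity
    intro Y hY Y' hY' hsupp
    apply TPVert.extreme_eq_of_supp hY hY'.1
    intro i j h0
    have hj : j ∉ suppHyp Y i := by
      rw [suppHyp, Set.mem_setOf_eq, h0]
      exact lt_irrefl 0
    rw [hsupp] at hj
    exact TPVert.trans_supp_zero hY'.1 hj
  · -- surjectivity
    intro H hcard hconn
    set G : Fin M → Finset (Fin (K + 1)) := fun i => (H i).toFinset with hG
    have hsz : ∀ e, (G e).card = m e + 1 := by
      intro e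
      rw [hG, ← Set.ncard_eq_toFinset_card']
      exact hcard e
    have hsum : (∑ e, m e) + 1 = K + 1 := by omega
    have hconn' : ∀ p q : Fin (K + 1), TPVert.Reach G Finset.univ p q := by
      intro p q
      refine Relation.ReflTransGen.mono ?_ p q (hconn p q)
      rintro a b ⟨e, ha, hb⟩
      exact ⟨e, Finset.mem_univ e, Set.mem_toFinset.2 ha, Set.mem_toFinset.2 hb⟩
    refine ⟨TPVert.YH G m, TPVert.YH_extreme hm hsz hsum hconn', ?_⟩
    rw [TPVert.YH_suppHyp hm hsz hsum hconn']
    funext i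
    exact Set.coe_toFinset (H i)
  · -- Minkowski decomposition
    intro Y hY
    set G : Fin M → Finset (Fin (K + 1)) := fun i => Finset.univ.filter (fun j => 0 < Y i j)
      with hG
    have hsz : ∀ e, (G e).card = m e + 1 := fun e => TPVert.extreme_supp_sizes hm hw hY e
    have hsum : (∑ e, m e) + 1 = K + 1 := by omega
    have hconn' : ∀ p q : Fin (K + 1), TPVert.Reach G Finset.univ p q := by
      intro p q
      refine Relation.ReflTransGen.mono ?_ p q (TPVert.trans_connected hm hw hY.1 p q)
      rintro a b ⟨e, ha, hb⟩
      exact ⟨e, Finset.mem_univ e,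
        Finset.mem_filter.2 ⟨Finset.mem_univ a, ha⟩,
        Finset.mem_filter.2 ⟨Finset.mem_univ b, hb⟩⟩
    have hYeq : Y = TPVert.YH G m := by
      apply TPVert.extreme_eq_of_supp hY (TPVert.YH_mem hm hsz hsum hconn')
      intro i j h0
      apply TPVert.YH_supp hm hsz hsum hconn'
      rw [hG]
      simp only [Finset.mem_filter, Finset.mem_univ, true_and, h0]
      exact lt_irrefl 0
    rw [hYeq, ← TPVert.BB_sum hm hsz hsum hconn']
    apply TPVert.sum_mem_pointwise
    intro r _
    exact Set.mem_image_of_mem _ (TPVert.BB_mem hm hsz hsum hconn' r)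
end
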